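/- arXiv:1004.2658 — 6 statements merged into one kernel-verified Lean document; each statement's English description precedes it below -/
import Mathlib

section
/- Let g be analytic and injective on the unit disk E = {z ∈ ℂ : |z| < 1} with g(0) = 0, g′(0) = 1, g′(z) ≠ 0 for all z ∈ E, and Re(1 + z g″(z)/g′(z)) > 0 for all z ∈ E (i.e., g is convex univalent). Then for every real α with 0 < α ≤ 1 and every z ∈ E with z ≠ 0, Re((g(z)/z)^α) > 1/2, where (·)^α denotes the principal complex power. -/
open Complex Metric Set Filter Real Topology

/-- `Re w > 1/2` iff `‖(w-1)/w‖ < 1` (for `w ≠ 0`). -/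
lemma re_gt_half_iff {w : ℂ} (hw : w ≠ 0) : 1/2 < w.re ↔ ‖(w - 1)/w‖ < 1 := by
  rw [norm_div, div_lt_one (by simpa [norm_pos_iff] using hw)]
  have h1 : ‖w - 1‖ ^ 2 = Complex.normSq (w - 1) := by
    rw [Complex.sq_norm]
  have h2 : ‖w‖ ^ 2 = Complex.normSq w := by rw [Complex.sq_norm]
  constructor
  · intro h
    have : ‖w - 1‖ ^ 2 < ‖w‖ ^ 2 := by
      rw [h1, h2]; simp only [Complex.normSq_apply, Complex.sub_re, Complex.sub_im,
        Complex.one_re, Complex.one_im]; nlinarith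
    exact lt_of_pow_lt_pow_left₀ 2 (norm_nonneg _) this
  · intro h
    have : ‖w - 1‖ ^ 2 < ‖w‖ ^ 2 := by
      apply pow_lt_pow_left₀ h (norm_nonneg _) (by norm_num)
    rw [h1, h2] at this
    simp only [Complex.normSq_apply, Complex.sub_re, Complex.sub_im,
      Complex.one_re, Complex.one_im] at this
    nlinarith

/-- Power map preserves the half-plane `Re > 1/2` for exponents in `(0,1]`. -/
lemma cpow_re_gt_half {w : ℂ} (hw : 1/2 < w.re) {α : ℝ} (hα0 : 0 < α) (hα1 : α ≤ 1) :
    1/2 < (w ^ (α : ℂ)).re := by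
  have hwre : 0 < w.re := by linarith
  have hw0 : w ≠ 0 := by
    intro h; rw [h] at hwre; simp at hwre
  set ρ := ‖w‖ with hρdef
  set φ := Complex.arg w with hφdef
  have hρ : 0 < ρ := norm_pos_iff.2 hw0
  have hφ : |φ| < π/2 := Complex.abs_arg_lt_pi_div_two_iff.mpr (Or.inl hwre)
  have hφmem : φ ∈ Icc (-(π/2)) (π/2) := by
    rcases abs_lt.1 hφ with ⟨h1, h2⟩; exact ⟨by linarith, by linarith⟩
  set c := Real.cos φ with hcdef
  have hc : 0 < c := Real.cos_pos_of_mem_Ioo (by rcases abs_lt.1 hφ with ⟨h1, h2⟩; exact ⟨h1, h2⟩)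
  have hρc : ρ * c = w.re := by
    have := Complex.cos_arg hw0
    rw [hcdef]; rw [show φ = w.arg from hφdef, this]; field_simp; exact hρdef
  -- value of the real part of the power
  have hval : (w ^ (α : ℂ)).re = ρ ^ α * Real.cos (α * φ) := by
    rw [Complex.cpow_def_of_ne_zero hw0, Complex.exp_re]
    have h1 : (Complex.log w * (α : ℂ)).re = Real.log ρ * α := by
      simp [Complex.mul_re, Complex.log_re, Complex.log_im, hρdef]
    have h2 : (Complex.log w * (α : ℂ)).im = φ * α := by
      simp [Complex.mul_im, Complex.log_re, Complex.log_im, hφdef]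
    rw [h1, h2, Real.rpow_def_of_pos hρ, mul_comm φ α]
  rw [hval]
  -- cos(αφ) ≥ α c + (1-α) ≥ c^α
  have hconc : α * c + (1 - α) ≤ Real.cos (α * φ) := by
    have := strictConcaveOn_cos_Icc.concaveOn.2 hφmem
      (⟨by simp [Real.pi_pos.le]; positivity, by positivity⟩ : (0:ℝ) ∈ Icc (-(π/2)) (π/2))
      hα0.le (by linarith : (0:ℝ) ≤ 1 - α) (by ring)
    simpa [smul_eq_mul, Real.cos_zero] using this
  have hgeom : c ^ α ≤ α * c + (1 - α) := by
    have := Real.geom_mean_le_arith_mean2_weighted hα0.le (by linarith : (0:ℝ) ≤ 1 - α)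
      hc.le zero_le_one (by ring)
    simpa using this
  have hcos_pos : c ^ α ≤ Real.cos (α * φ) := le_trans hgeom hconc
  have hcα : 0 < c ^ α := Real.rpow_pos_of_pos hc α
  have hρgt : 1/(2*c) < ρ := by
    rw [div_lt_iff₀ (by positivity)]; nlinarith
  have hρα : (1/(2*c)) ^ α < ρ ^ α := Real.rpow_lt_rpow (by positivity) hρgt hα0
  calc (1:ℝ)/2 = ((1:ℝ)/2) ^ (1:ℝ) := by rw [Real.rpow_one]
    _ ≤ ((1:ℝ)/2) ^ α := Real.rpow_le_rpow_of_exponent_ge (by norm_num) (by norm_num) hα1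
    _ = ((1/(2*c)) * c) ^ α := by congr 1; field_simp
    _ = (1/(2*c)) ^ α * c ^ α := Real.mul_rpow (by positivity) hc.le
    _ < ρ ^ α * c ^ α := by exact mul_lt_mul_of_pos_right hρα hcα
    _ ≤ ρ ^ α * Real.cos (α * φ) := by
        exact mul_le_mul_of_nonneg_left hcos_pos (Real.rpow_pos_of_pos hρ α).le

/-- Derivative of `normSq ∘ u` for a curve `u : ℝ → ℂ`. -/
lemma hasDerivAt_normSq_comp (u : ℝ → ℂ) (t : ℝ) (u' : ℂ) (hu : HasDerivAt u u' t) :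
    HasDerivAt (fun s => Complex.normSq (u s)) (2 * ((starRingEnd ℂ) (u t) * u').re) t := by
  have hre : HasDerivAt (fun s => (u s).re) u'.re t := by
    exact (Complex.reCLM.hasFDerivAt.comp_hasDerivAt t hu :)
  have him : HasDerivAt (fun s => (u s).im) u'.im t := by
    exact (Complex.imCLM.hasFDerivAt.comp_hasDerivAt t hu :)
  have H := (hre.mul hre).add (him.mul him)
  have heq : (fun s => Complex.normSq (u s))
      = fun s => (u s).re * (u s).re + (u s).im * (u s).im := by
    funext s; rw [Complex.normSq_apply]
  rw [heq]
  refine H.congr_deriv ?_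
  simp [Complex.mul_re, Complex.conj_re, Complex.conj_im]
  ring

/-- Composition of a ℂ-differentiable map with a real curve. -/
lemma comp_helper (F : ℂ → ℂ) (u : ℝ → ℂ) (t : ℝ) (F' u' : ℂ)
    (hF : HasDerivAt F F' (u t)) (hu : HasDerivAt u u' t) :
    HasDerivAt (fun s => F (u s)) (F' * u') t := by
  have h1 := (hF.hasFDerivAt.restrictScalars ℝ).comp_hasDerivAt t hu
  exact h1.congr_deriv (by simp [mul_comm])

/-- **Jack's lemma**. -/
lemma jack {f : ℂ → ℂ} (hf : DifferentiableOn ℂ f (ball 0 1)) (hf0 : f 0 = 0)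
    {z0 : ℂ} (hz0 : z0 ∈ ball (0:ℂ) 1) (hz0' : z0 ≠ 0)
    (hmax : ∀ z : ℂ, ‖z‖ ≤ ‖z0‖ → ‖f z‖ ≤ ‖f z0‖) (hfz0 : f z0 ≠ 0) :
    ∃ k : ℝ, 1 ≤ k ∧ z0 * deriv f z0 = (k : ℂ) * f z0 := by
  have hr1 : ‖z0‖ < 1 := by simpa using hz0
  have hr0 : 0 < ‖z0‖ := norm_pos_iff.2 hz0'
  set M2 : ℝ := Complex.normSq (f z0) with hM2def
  have hM2 : 0 < M2 := Complex.normSq_pos.2 hfz0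
  set c : ℂ := (starRingEnd ℂ) (f z0) * (z0 * deriv f z0) with hcdef
  have fd : ∀ z ∈ ball (0:ℂ) 1, HasDerivAt f (deriv f z) z := fun z hz =>
    (hf.differentiableAt (isOpen_ball.mem_nhds hz)).hasDerivAt
  -- Part 1 : tangential derivative vanishes, so `c` is real
  have him : c.im = 0 := by
    set A : ℝ → ℝ := fun θ => Complex.normSq (f (z0 * Complex.exp (θ * Complex.I))) with hAdef
    have hA : HasDerivAt A (2 * ((starRingEnd ℂ) (f z0) * (deriv f z0 * (z0 * Complex.I))).re) 0 := by
      have h1 : HasDerivAt (fun θ : ℝ => (θ:ℂ) * Complex.I) Complex.I 0 := by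
        simpa using (Complex.ofRealCLM.hasDerivAt.mul_const Complex.I)
      have h2 : HasDerivAt (fun θ : ℝ => Complex.exp ((θ:ℂ) * Complex.I)) Complex.I 0 := by
        have := comp_helper Complex.exp (fun θ : ℝ => (θ:ℂ) * Complex.I) 0
          (Complex.exp ((0:ℝ) * Complex.I)) Complex.I (Complex.hasDerivAt_exp _) h1
        simpa using this
      have h3 : HasDerivAt (fun θ : ℝ => z0 * Complex.exp ((θ:ℂ) * Complex.I)) (z0 * Complex.I) 0 :=
        by simpa using h2.const_mul z0
      have h4 : HasDerivAt f (deriv f z0) ((fun θ : ℝ => z0 * Complex.exp ((θ:ℂ) * Complex.I)) 0) := by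
        simpa using fd z0 hz0
      have h5 := comp_helper f _ 0 (deriv f z0) (z0 * Complex.I) h4 h3
      have h6 := hasDerivAt_normSq_comp _ 0 _ h5
      simpa [hAdef] using h6
    have hAle : ∀ θ : ℝ, A θ ≤ A 0 := by
      intro θ
      have hn : ‖z0 * Complex.exp (θ * Complex.I)‖ ≤ ‖z0‖ := by
        rw [norm_mul]
        simp [Complex.norm_exp]
      have := hmax _ hn
      have h0 : A 0 = Complex.normSq (f z0) := by simp [hAdef]
      rw [h0, hAdef]
      simp only [Complex.normSq_eq_norm_sq]
      exact pow_le_pow_left₀ (by positivity) (by simpa using this) 2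
    have hloc : IsLocalMax A 0 := Filter.Eventually.of_forall hAle
    have hder0 := hloc.deriv_eq_zero
    rw [hA.deriv] at hder0
    -- rewrite in terms of c
    have : ((starRingEnd ℂ) (f z0) * (deriv f z0 * (z0 * Complex.I))) = c * Complex.I := by
      rw [hcdef]; ring
    rw [this] at hder0
    simp only [Complex.mul_re, Complex.I_re, Complex.I_im] at hder0
    linarith
  -- Part 2 : radial derivative inequality, so `Re c ≥ M2`
  have hre : M2 ≤ c.re := by
    -- Schwarz bound
    have hSch : ∀ t : ℝ, 0 ≤ t → t < 1 → ‖f ((t:ℂ) * z0)‖ ≤ t * ‖f z0‖ := by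
      intro t ht0 ht1
      have hmem : (t:ℂ) * z0 ∈ ball (0:ℂ) ‖z0‖ := by
        rw [mem_ball_zero_iff, norm_mul, Complex.norm_real, Real.norm_of_nonneg ht0]
        calc t * ‖z0‖ < 1 * ‖z0‖ := by exact mul_lt_mul_of_pos_right ht1 hr0
          _ = ‖z0‖ := one_mul _
      refine le_of_forall_pos_le_add ?_
      intro ε hε
      have hd : DifferentiableOn ℂ f (ball 0 ‖z0‖) := hf.mono (ball_subset_ball hr1.le)
      have hmaps : MapsTo f (ball (0:ℂ) ‖z0‖) (ball (f 0) (‖f z0‖ + ε)) := by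
        intro z hz
        rw [hf0, mem_ball_zero_iff]
        have : ‖f z‖ ≤ ‖f z0‖ := hmax z (by
          rw [mem_ball_zero_iff] at hz; exact hz.le)
        linarith
      have := Complex.dist_le_div_mul_dist_of_mapsTo_ball hd (hmaps.mono_right ball_subset_closedBall) hmem
      rw [hf0, dist_zero_right, dist_zero_right, norm_mul, Complex.norm_real,
        Real.norm_of_nonneg ht0] at this
      calc ‖f ((t:ℂ) * z0)‖ ≤ (‖f z0‖ + ε) / ‖z0‖ * (t * ‖z0‖) := this
        _ = t * ‖f z0‖ + ε * t := by
            have habs : ‖z0‖ ≠ 0 := by simpa using hr0.ne'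
            field_simp
        _ ≤ t * ‖f z0‖ + ε := by nlinarith
    -- derivative of C at 1
    set B : ℝ → ℝ := fun t => Complex.normSq (f ((t:ℂ) * z0)) with hBdef
    set C : ℝ → ℝ := fun t => B t - t ^ 2 * M2 with hCdef
    have hB : HasDerivAt B (2 * c.re) 1 := by
      have h1 : HasDerivAt (fun t : ℝ => (t:ℂ) * z0) z0 1 := by
        simpa using (Complex.ofRealCLM.hasDerivAt.mul_const z0)
      have h4 : HasDerivAt f (deriv f z0) ((fun t : ℝ => (t:ℂ) * z0) 1) := by
        simpa using fd z0 hz0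
      have h5 := comp_helper f _ 1 (deriv f z0) z0 h4 h1
      have h6 := hasDerivAt_normSq_comp _ 1 _ h5
      have : ((starRingEnd ℂ) (f ((1:ℝ) * z0 : ℂ)) * (deriv f z0 * z0)) = c := by
        rw [hcdef]; push_cast; rw [one_mul]; ring
      rw [this] at h6
      exact h6
    have hC : HasDerivAt C (2 * c.re - 2 * M2) 1 := by
      have h7 : HasDerivAt (fun t : ℝ => t ^ 2 * M2) (2 * M2) 1 := by
        simpa using ((hasDerivAt_pow 2 (1:ℝ)).mul_const M2)
      exact hB.sub h7
    have hC1 : C 1 = 0 := by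
      simp only [hCdef, hBdef, hM2def]
      norm_num
    have hCle : ∀ t ∈ Ioo (0:ℝ) 1, C t ≤ 0 := by
      intro t ht
      have h1 := hSch t ht.1.le ht.2
      have : Complex.normSq (f ((t:ℂ) * z0)) ≤ (t * ‖f z0‖) ^ 2 := by
        rw [Complex.normSq_eq_norm_sq]
        exact pow_le_pow_left₀ (by positivity) (by simpa using h1) 2
      have h2 : (t * ‖f z0‖) ^ 2 = t ^ 2 * M2 := by
        rw [hM2def, Complex.normSq_eq_norm_sq]; ring
      simp only [hCdef]
      rw [← h2] at *
      linarith [this]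
    -- left derivative nonneg
    have hslope := hasDerivAt_iff_tendsto_slope.1 hC
    have hmono : Tendsto (slope C 1) (𝓝[<] (1:ℝ)) (𝓝 (2 * c.re - 2 * M2)) :=
      hslope.mono_left (nhdsWithin_mono _ (fun x hx => ne_of_lt hx))
    have hev : ∀ᶠ t in 𝓝[<] (1:ℝ), 0 ≤ slope C 1 t := by
      filter_upwards [Ioo_mem_nhdsLT_of_mem (⟨by norm_num, le_refl (1:ℝ)⟩ : (1:ℝ) ∈ Ioc (0:ℝ) 1)]
        with t ht
      have h1 := hCle t ht
      rw [slope_def_field]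
      rw [div_nonneg_iff]
      right
      constructor
      · rw [hC1]; linarith
      · linarith [ht.2]
    have := ge_of_tendsto hmono hev
    linarith
  -- conclude
  refine ⟨c.re / M2, ?_, ?_⟩
  · rw [le_div_iff₀ hM2]; linarith
  · have hcre : c = ((c.re : ℝ) : ℂ) := by
      apply Complex.ext <;> simp [him]
    have h2 : (starRingEnd ℂ) (f z0) * f z0 = (M2 : ℂ) := by
      rw [mul_comm, hM2def, Complex.mul_conj]
    have hM2ne : (M2 : ℂ) ≠ 0 := by exact_mod_cast hM2.ne'
    have hconj : (starRingEnd ℂ) (f z0) ≠ 0 := by simpa using hfz0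
    apply mul_left_cancel₀ hconj
    push_cast
    have hfinal : (M2:ℂ) * ((c.re:ℂ) / (M2:ℂ)) = (c.re:ℂ) := by field_simp
    rw [← hcdef, mul_comm ((c.re:ℂ) / (M2:ℂ)) (f z0), ← mul_assoc, h2, hfinal]
    exact hcre

/-- If `P` is analytic nonvanishing on the disk with `P 0 = 1` and `Re P ≤ 1/2` somewhere,
then Jack's lemma produces a critical point. -/
lemma jack_application {P : ℂ → ℂ} (hP : DifferentiableOn ℂ P (ball 0 1))
    (hP0 : P 0 = 1) (hPne : ∀ z ∈ ball (0:ℂ) 1, P z ≠ 0)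
    {z1 : ℂ} (hz1 : z1 ∈ ball (0:ℂ) 1) (hbad : (P z1).re ≤ 1/2) :
    ∃ z0 ∈ ball (0:ℂ) 1, z0 ≠ 0 ∧ ∃ k : ℝ, 1 ≤ k ∧ ∃ w : ℂ, ‖w‖ = 1 ∧ w ≠ 1 ∧
      P z0 = 1/(1 - w) ∧ z0 * deriv P z0 = (k : ℂ) * w * P z0 ^ 2 := by
  have hr1 : ‖z1‖ < 1 := by simpa using hz1
  set ω : ℂ → ℂ := fun z => (P z - 1) / P z with hωdef
  have hω : DifferentiableOn ℂ ω (ball 0 1) :=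
    ((hP.sub (differentiableOn_const 1)).div hP hPne)
  have hω0 : ω 0 = 0 := by simp [hωdef, hP0]
  have hω1 : 1 ≤ ‖ω z1‖ := by
    by_contra h
    push_neg at h
    exact absurd ((re_gt_half_iff (hPne z1 hz1)).2 h) (not_lt.2 hbad)
  set T : Set ℂ := {z | z ∈ closedBall (0:ℂ) ‖z1‖ ∧ 1 ≤ ‖ω z‖} with hTdef
  have hsub : closedBall (0:ℂ) ‖z1‖ ⊆ ball 0 1 := closedBall_subset_ball hr1
  have hcont : ContinuousOn ω (closedBall (0:ℂ) ‖z1‖) := (hω.continuousOn).mono hsub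
  have hTclosed : IsClosed T := by
    have h := hcont.preimage_isClosed_of_isClosed isClosed_closedBall
      (isClosed_le continuous_const continuous_norm : IsClosed {x : ℂ | 1 ≤ ‖x‖})
    have heq : T = closedBall (0:ℂ) ‖z1‖ ∩ ω ⁻¹' {x : ℂ | 1 ≤ ‖x‖} := by
      ext z; simp [hTdef, Set.mem_setOf_eq]
    rw [heq]; exact h
  have hTsub : T ⊆ closedBall (0:ℂ) ‖z1‖ := fun z hz => hz.1
  have hTc : IsCompact T := (isCompact_closedBall _ _).of_isClosed_subset hTclosed hTsub
  have hTne : T.Nonempty := ⟨z1, by rw [mem_closedBall_zero_iff], hω1⟩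
  obtain ⟨z0, hz0T, hz0min⟩ := hTc.exists_isMinOn hTne (continuous_norm.continuousOn)
  have hz0n : ‖z0‖ ≤ ‖z1‖ := by simpa using hz0T.1
  have hz0ball : z0 ∈ ball (0:ℂ) 1 := by
    rw [mem_ball_zero_iff]; linarith
  have hz0ge : 1 ≤ ‖ω z0‖ := hz0T.2
  have hz0ne : z0 ≠ 0 := by
    intro h
    rw [h, hω0] at hz0ge
    simp at hz0ge
    linarith
  have hz0pos : 0 < ‖z0‖ := norm_pos_iff.2 hz0ne
  -- ‖ω z0‖ = 1 via IVT
  have hmemt : ∀ t : ℝ, t ∈ Icc (0:ℝ) 1 → (t:ℂ) * z0 ∈ ball (0:ℂ) 1 := by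
    intro t ht
    obtain ⟨ht0, ht1⟩ := ht
    rw [mem_ball_zero_iff, norm_mul, Complex.norm_real, Real.norm_of_nonneg ht0]
    have h1 : t * ‖z0‖ ≤ ‖z0‖ := by nlinarith
    linarith [hz0n, hr1]
  have hcont2 : ContinuousOn (fun t : ℝ => ‖ω ((t:ℂ) * z0)‖) (Icc 0 1) := by
    apply ContinuousOn.norm
    apply hω.continuousOn.comp
    · exact (Complex.continuous_ofReal.mul continuous_const).continuousOn
    · intro t ht; exact hmemt t ht
  have hωnorm1 : ‖ω z0‖ = 1 := by
    have h1mem : (1:ℝ) ∈ Icc ((fun t : ℝ => ‖ω ((t:ℂ) * z0)‖) 0) ((fun t : ℝ => ‖ω ((t:ℂ) * z0)‖) 1) := by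
      constructor
      · simp [hω0]
      · simpa using hz0ge
    obtain ⟨t, ht, hteq⟩ := intermediate_value_Icc (zero_le_one) hcont2 h1mem
    have htz0T : (t:ℂ) * z0 ∈ T := by
      constructor
      · rw [mem_closedBall_zero_iff, norm_mul, Complex.norm_real, Real.norm_of_nonneg ht.1]
        nlinarith [ht.2, hz0pos]
      · exact (by simpa using hteq : ‖ω ((t:ℂ) * z0)‖ = 1).ge
    have := hz0min htz0T
    simp only [mem_setOf_eq] at this
    have h2 : ‖z0‖ ≤ t * ‖z0‖ := by
      simpa [norm_mul, Complex.norm_real, Real.norm_eq_abs, _root_.abs_of_nonneg ht.1] using this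
    have ht1 : 1 ≤ t := by
      by_contra hlt
      push_neg at hlt
      nlinarith
    have : t = 1 := le_antisymm ht.2 ht1
    rw [this] at hteq
    simpa using hteq
  -- max property on the closed disk of radius ‖z0‖
  have hmax : ∀ z : ℂ, ‖z‖ ≤ ‖z0‖ → ‖ω z‖ ≤ ‖ω z0‖ := by
    intro z hz
    rw [hωnorm1]
    rcases eq_or_ne z 0 with rfl | hzne
    · rw [hω0]; simp
    have hzpos : 0 < ‖z‖ := norm_pos_iff.2 hzne
    have hzball : z ∈ ball (0:ℂ) 1 := by rw [mem_ball_zero_iff]; linarith [hz0n, hr1]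
    have hlt : ∀ t : ℝ, t ∈ Ico (0:ℝ) 1 → ‖ω ((t:ℂ) * z)‖ < 1 := by
      intro t ht
      by_contra hge
      push_neg at hge
      have htzT : (t:ℂ) * z ∈ T := by
        constructor
        · rw [mem_closedBall_zero_iff, norm_mul, Complex.norm_real, Real.norm_of_nonneg ht.1]
          nlinarith [ht.2]
        · exact hge
      have := hz0min htzT
      simp only [mem_setOf_eq] at this
      have h2 : ‖z0‖ ≤ t * ‖z‖ := by
        simpa [norm_mul, Complex.norm_real, Real.norm_eq_abs, _root_.abs_of_nonneg ht.1] using this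
      nlinarith [ht.2]
    -- limit as t → 1⁻
    have htend : Tendsto (fun t : ℝ => ‖ω ((t:ℂ) * z)‖) (𝓝[<] (1:ℝ)) (𝓝 ‖ω z‖) := by
      have hc : ContinuousAt (fun t : ℝ => ‖ω ((t:ℂ) * z)‖) 1 := by
        have hmul : ContinuousAt (fun t : ℝ => (t:ℂ) * z) 1 :=
          (Complex.continuous_ofReal.mul continuous_const).continuousAt
        have hωc : ContinuousAt ω (((1:ℝ):ℂ) * z) := by
          rw [show (((1:ℝ):ℂ) * z) = z by simp]
          exact (hω.differentiableAt (isOpen_ball.mem_nhds hzball)).continuousAt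
        exact (ContinuousAt.comp (f := fun t : ℝ => (t:ℂ) * z) hωc hmul).norm
      have h3 := hc.tendsto.mono_left (nhdsWithin_le_nhds : 𝓝[<] (1:ℝ) ≤ 𝓝 1)
      simpa using h3
    refine le_of_tendsto htend ?_
    filter_upwards [Ioo_mem_nhdsLT_of_mem (⟨by norm_num, le_refl (1:ℝ)⟩ : (1:ℝ) ∈ Ioc (0:ℝ) 1)]
      with t ht
    exact (hlt t ⟨ht.1.le, ht.2⟩).le
  have hωz0ne : ω z0 ≠ 0 := by
    intro h; rw [h] at hωnorm1; simp at hωnorm1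
  obtain ⟨k, hk, hrel⟩ := jack hω hω0 hz0ball hz0ne hmax hωz0ne
  have hPz0ne : P z0 ≠ 0 := hPne z0 hz0ball
  set w : ℂ := ω z0 with hwdef
  have hw1 : w ≠ 1 := by
    intro h
    have : (P z0 - 1) / P z0 = 1 := h
    rw [div_eq_one_iff_eq hPz0ne] at this
    simp at this
  have h1w : (1:ℂ) - w ≠ 0 := by
    intro h
    exact hw1 (by linear_combination -h)
  have hPval : P z0 = 1 / (1 - w) := by
    have : 1 - w = 1 / P z0 := by
      rw [hwdef, hωdef]
      field_simp
      ring
    rw [this]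
    field_simp
  -- derivative of ω
  have hPd : DifferentiableAt ℂ P z0 := hP.differentiableAt (isOpen_ball.mem_nhds hz0ball)
  have hd1 : deriv ω z0 = deriv P z0 / P z0 ^ 2 := by
    rw [hωdef]
    rw [deriv_fun_div (hPd.sub_const 1) hPd hPz0ne]
    rw [deriv_fun_sub hPd (differentiableAt_const 1), deriv_const, sub_zero]
    field_simp
    ring
  refine ⟨z0, hz0ball, hz0ne, k, hk, w, hωnorm1, hw1, hPval, ?_⟩
  rw [hd1] at hrel
  field_simp at hrel
  linear_combination hrel

lemma re_aux1 {w : ℂ} (hw : ‖w‖ = 1) (hw1 : w ≠ 1) {k : ℝ} (hk : 1 ≤ k) :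
    (((1:ℂ) + (k:ℂ) * w) / (1 - w)).re ≤ 0 := by
  have hsq : w.re ^ 2 + w.im ^ 2 = 1 := by
    have : Complex.normSq w = 1 := by
      rw [Complex.normSq_eq_norm_sq, hw]; norm_num
    rw [Complex.normSq_apply] at this; nlinarith [this]
  have hre1 : w.re ≤ 1 := by nlinarith
  have hd : 0 < Complex.normSq (1 - w) :=
    Complex.normSq_pos.2 (sub_ne_zero.2 (Ne.symm hw1))
  rw [Complex.div_re, ← add_div]
  apply div_nonpos_of_nonpos_of_nonneg _ hd.le
  have h1 : ((1:ℂ) + (k:ℂ) * w).re = 1 + k * w.re := by simp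
  have h2 : ((1:ℂ) + (k:ℂ) * w).im = k * w.im := by simp
  have h3 : ((1:ℂ) - w).re = 1 - w.re := by simp
  have h4 : ((1:ℂ) - w).im = -w.im := by simp
  rw [h1, h2, h3, h4]
  nlinarith [hsq, hre1, hk]

lemma re_aux2 {w : ℂ} (hw : ‖w‖ = 1) (hw1 : w ≠ 1) {k : ℝ} (hk : 1 ≤ k) :
    ((1:ℂ) + (k:ℂ) * w / (1 - w)).re ≤ 1/2 := by
  have hsq : w.re ^ 2 + w.im ^ 2 = 1 := by
    have : Complex.normSq w = 1 := by
      rw [Complex.normSq_eq_norm_sq, hw]; norm_num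
    rw [Complex.normSq_apply] at this; nlinarith [this]
  have hre1 : w.re < 1 := by
    rcases lt_or_eq_of_le (by nlinarith : w.re ≤ 1) with h | h
    · exact h
    · exfalso
      have him : w.im = 0 := by nlinarith
      exact hw1 (Complex.ext h him)
  have hns : Complex.normSq (1 - w) = 2 * (1 - w.re) := by
    rw [Complex.normSq_apply]
    simp only [Complex.sub_re, Complex.sub_im, Complex.one_re, Complex.one_im]
    nlinarith [hsq]
  have hnum : ((k:ℂ) * w).re * ((1:ℂ) - w).re + ((k:ℂ) * w).im * ((1:ℂ) - w).im
      = k * (w.re - 1) := by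
    have h1 : ((k:ℂ) * w).re = k * w.re := by simp
    have h2 : ((k:ℂ) * w).im = k * w.im := by simp
    have h3 : ((1:ℂ) - w).re = 1 - w.re := by simp
    have h4 : ((1:ℂ) - w).im = -w.im := by simp
    rw [h1, h2, h3, h4]
    nlinarith [hsq]
  rw [Complex.add_re, Complex.one_re, Complex.div_re, ← add_div, hnum, hns]
  have hpos : (0:ℝ) < 1 - w.re := by linarith
  have : k * (w.re - 1) / (2 * (1 - w.re)) = -(k/2) := by
    field_simp
    ring
  rw [this]
  linarith

/-- If `g` is convex univalent on the unit disk (analytic, injective, `g 0 = 0`,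
`g' 0 = 1`, `g' ≠ 0` and `Re (1 + z g''/g') > 0`), then for `0 < α ≤ 1` and
`z` in the punctured disk, `Re ((g z / z) ^ α) > 1/2` (principal power). -/
theorem stmt_3 (g : ℂ → ℂ)
    (hgd : DifferentiableOn ℂ g (ball (0 : ℂ) 1))
    (hginj : Set.InjOn g (ball (0 : ℂ) 1))
    (hg0 : g 0 = 0) (hg1 : deriv g 0 = 1)
    (hg' : ∀ z ∈ ball (0 : ℂ) 1, deriv g z ≠ 0)
    (hgc : ∀ z ∈ ball (0 : ℂ) 1, 0 < (1 + z * deriv (deriv g) z / deriv g z).re)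
    (α : ℝ) (hα0 : 0 < α) (hα1 : α ≤ 1) :
    ∀ z ∈ ball (0 : ℂ) 1, z ≠ 0 → 1 / 2 < ((g z / z) ^ (α : ℂ)).re := by
  have hopen : IsOpen (ball (0:ℂ) 1) := isOpen_ball
  have h0mem : (0:ℂ) ∈ ball (0:ℂ) 1 := by simp
  -- the function q = g z / z (with q 0 = 1)
  set q : ℂ → ℂ := dslope g 0 with hqdef
  have hqd : DifferentiableOn ℂ q (ball 0 1) :=
    (differentiableOn_dslope (hopen.mem_nhds h0mem)).2 hgd
  have hq0 : q 0 = 1 := by rw [hqdef, dslope_same, hg1]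
  have hqz : ∀ z : ℂ, z ≠ 0 → q z = g z / z := by
    intro z hz
    rw [hqdef, dslope_of_ne _ hz, slope_def_field, hg0, sub_zero, sub_zero]
  have hgne : ∀ z ∈ ball (0:ℂ) 1, z ≠ 0 → g z ≠ 0 := by
    intro z hz hzne h
    exact hzne (hginj hz h0mem (by rw [h, hg0]))
  have hqne : ∀ z ∈ ball (0:ℂ) 1, q z ≠ 0 := by
    intro z hz
    rcases eq_or_ne z 0 with rfl | hzne
    · rw [hq0]; exact one_ne_zero
    · rw [hqz z hzne]; exact div_ne_zero (hgne z hz hzne) hzne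
  -- the function p = z g' / g (with p 0 = 1)
  set p : ℂ → ℂ := fun z => deriv g z / q z with hpdef
  have hgd' : DifferentiableOn ℂ (deriv g) (ball 0 1) :=
    ((hgd.analyticOnNhd hopen).deriv).differentiableOn
  have hpd : DifferentiableOn ℂ p (ball 0 1) := hgd'.div hqd hqne
  have hp0 : p 0 = 1 := by rw [hpdef]; simp only; rw [hg1, hq0]; norm_num
  have hpne : ∀ z ∈ ball (0:ℂ) 1, p z ≠ 0 := fun z hz =>
    div_ne_zero (hg' z hz) (hqne z hz)
  -- derivative identity for q away from 0
  have hqderiv : ∀ z ∈ ball (0:ℂ) 1, z ≠ 0 → z * deriv q z = deriv g z - q z := by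
    intro z hz hzne
    have hev : q =ᶠ[𝓝 z] fun w => g w / w := by
      filter_upwards [isOpen_ne.mem_nhds hzne] with u hu
      exact hqz u hu
    rw [hev.deriv_eq]
    have hgz : DifferentiableAt ℂ g z := hgd.differentiableAt (hopen.mem_nhds hz)
    rw [deriv_fun_div hgz differentiableAt_fun_id hzne, deriv_id'']
    rw [hqz z hzne]
    field_simp
  have hpz : ∀ z : ℂ, p z = deriv g z / q z := fun z => by rw [hpdef]
  clear_value p q
  -- Step 1 : Re p > 1/2 on the disk
  have hstep1 : ∀ z ∈ ball (0:ℂ) 1, 1/2 < (p z).re := by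
    by_contra hcon
    push_neg at hcon
    obtain ⟨z1, hz1, hz1le⟩ := hcon
    obtain ⟨z0, hz0, hz0ne, k, hk, w, hwn, hw1, hPval, hkey⟩ :=
      jack_application hpd hp0 hpne hz1 hz1le
    have h1w : (1:ℂ) - w ≠ 0 := sub_ne_zero.2 (Ne.symm hw1)
    have hG1 : deriv g z0 ≠ 0 := hg' z0 hz0
    have hQ : q z0 ≠ 0 := hqne z0 hz0
    have hP : p z0 ≠ 0 := hpne z0 hz0
    have hQ' : deriv q z0 = (deriv g z0 - q z0) / z0 := by
      have := hqderiv z0 hz0 hz0ne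
      field_simp
      linear_combination this
    -- deriv p
    have hdp : deriv p z0 = (deriv (deriv g) z0 * q z0 - deriv g z0 * deriv q z0) / q z0 ^ 2 := by
      rw [hpdef]
      exact deriv_div (hgd'.differentiableAt (hopen.mem_nhds hz0))
        (hqd.differentiableAt (hopen.mem_nhds hz0)) hQ
    -- the convexity quantity equals p + z p'/p
    have hid : (1:ℂ) + z0 * deriv (deriv g) z0 / deriv g z0
        = p z0 + z0 * deriv p z0 / p z0 := by
      rw [hdp, hpz z0, hQ']
      field_simp [hG1, hQ, hz0ne]
      ring
    -- and p + z p'/p = (1 + k w)/(1 - w)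
    have hid2 : p z0 + z0 * deriv p z0 / p z0 = ((1:ℂ) + (k:ℂ) * w) / (1 - w) := by
      have h2 : z0 * deriv p z0 / p z0 = (k:ℂ) * w * p z0 := by
        rw [div_eq_iff hP]
        linear_combination hkey
      rw [h2, hPval]
      field_simp
    have hc := hgc z0 hz0
    rw [hid, hid2] at hc
    have := re_aux1 hwn hw1 hk
    linarith
  -- Step 2 : Re q > 1/2 on the disk
  have hstep2 : ∀ z ∈ ball (0:ℂ) 1, 1/2 < (q z).re := by
    by_contra hcon
    push_neg at hcon
    obtain ⟨z1, hz1, hz1le⟩ := hcon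
    obtain ⟨z0, hz0, hz0ne, k, hk, w, hwn, hw1, hPval, hkey⟩ :=
      jack_application hqd hq0 hqne hz1 hz1le
    have h1w : (1:ℂ) - w ≠ 0 := sub_ne_zero.2 (Ne.symm hw1)
    have hQ : q z0 ≠ 0 := hqne z0 hz0
    -- p z0 = 1 + z0 q' / q = 1 + k w / (1 - w)
    have hid : p z0 = (1:ℂ) + (k:ℂ) * w / (1 - w) := by
      have h1 := hqderiv z0 hz0 hz0ne
      rw [hkey] at h1
      -- deriv g z0 = k w q² + q
      have hg1' : deriv g z0 = (k:ℂ) * w * q z0 ^ 2 + q z0 := by linear_combination -h1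
      rw [hpz z0, hg1', hPval]
      field_simp
      ring
    have h1 := hstep1 z0 hz0
    rw [hid] at h1
    have := re_aux2 hwn hw1 hk
    linarith
  -- conclusion
  intro z hz hzne
  have h1 : 1/2 < (g z / z).re := by
    have := hstep2 z hz
    rwa [hqz z hzne] at this
  exact cpow_re_gt_half h1 hα0 hα1
end

section
/- Let α > 0, let n ≥ 0 be an integer, and let 0 ≤ β < 1. Suppose F and G are analytic on E with F(0) = G(0) = 1 and Taylor expansions F(z) = Σ_{k≥0} f_k z^k, G(z) = Σ_{k≥0} g_k z^k. If F satisfies condition T_n^α(β) and Re G(z) > 1/2 for all z ∈ E, then the quasi-convolution H(z) = Σ_{k≥0} f_k g_k z^k satisfies condition T_n^α(β). -/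
open Complex Metric MeasureTheory intervalIntegral

section Helpers

lemma normExp (x : ℂ) (hx : x.re = 0) : ‖Complex.exp x‖ = 1 := by
  rw [Complex.norm_exp, hx, Real.exp_zero]

lemma expIntegral (m : ℤ) :
    (∫ θ in (0:ℝ)..(2*Real.pi), Complex.exp (m*θ*I)) = if m = 0 then (2*Real.pi:ℂ) else 0 := by
  rcases eq_or_ne m 0 with h | h
  · simp [h]
  · have h1 : ∀ θ : ℝ, (m:ℂ)*θ*I = ((m:ℂ)*I)*θ := by intro θ; ring
    simp only [h1]
    rw [integral_exp_mul_complex (by simp [h, Complex.ext_iff, Complex.I_re, Complex.I_im])]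
    have : Complex.exp ((m:ℂ)*I*(2*Real.pi)) = 1 := by
      rw [show ((m:ℂ)*I*(2*Real.pi)) = (m:ℤ)*(2*Real.pi*I) by push_cast; ring]
      exact Complex.exp_int_mul_two_pi_mul_I m
    simp [this, h]

lemma exists_bound {u : ℕ → ℂ} (h : Summable u) : ∃ M : ℝ, 0 ≤ M ∧ ∀ k, ‖u k‖ ≤ M := by
  have h0 := h.tendsto_atTop_zero.norm
  simp only [norm_zero] at h0
  obtain ⟨M, hM⟩ := h0.bddAbove_range
  exact ⟨M, le_trans (norm_nonneg (u 0)) (hM ⟨0, rfl⟩), fun k => hM ⟨k, rfl⟩⟩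

lemma swapIntegral (v : ℕ → ℝ → ℂ) (c : ℕ → ℝ) (hv : ∀ k, Continuous (v k))
    (hb : ∀ k θ, ‖v k θ‖ ≤ c k) (hc : Summable c) :
    (∫ θ in (0:ℝ)..(2*Real.pi), ∑' k, v k θ) = ∑' k, ∫ θ in (0:ℝ)..(2*Real.pi), v k θ := by
  have hle : (0:ℝ) ≤ 2*Real.pi := by positivity
  rw [integral_of_le hle]
  rw [tsum_congr (fun k => integral_of_le hle)]
  refine (MeasureTheory.integral_tsum_of_summable_integral_norm
    (fun k => (hv k).integrableOn_Ioc) ?_).symm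
  have hck : ∀ k, 0 ≤ c k := fun k => le_trans (norm_nonneg _) (hb k 0)
  refine Summable.of_nonneg_of_le (fun k => integral_nonneg (fun θ => norm_nonneg _))
    (fun k => ?_) (hc.mul_right (2*Real.pi))
  calc ∫ θ in Set.Ioc (0:ℝ) (2*Real.pi), ‖v k θ‖
      ≤ ∫ θ in Set.Ioc (0:ℝ) (2*Real.pi), c k := by
        refine setIntegral_mono_on ((hv k).norm.integrableOn_Ioc) (integrableOn_const ?_)
          measurableSet_Ioc (fun θ _ => hb k θ)
        rw [Real.volume_Ioc]; exact ENNReal.ofReal_ne_top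
    _ = c k * (2*Real.pi) := by
        rw [setIntegral_const, Real.volume_real_Ioc_of_le hle, smul_eq_mul,
          mul_comm]; ring_nf

lemma contExpMul (r : ℂ) : Continuous fun θ : ℝ => Complex.exp (r*θ*I) := by
  fun_prop

lemma normTerm (b : ℂ) (r : ℂ) (θ : ℝ) : ‖b * Complex.exp (r.re*θ*I)‖ = ‖b‖ := by
  rw [norm_mul, normExp _ (by simp), mul_one]

lemma myFourierCoeff (b : ℕ → ℂ) (hb : Summable fun k => ‖b k‖) (j : ℕ) :
    (∫ θ in (0:ℝ)..(2*Real.pi),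
      Complex.exp (j*θ*I) * ∑' k, b k * Complex.exp (-(k*θ*I))) = 2*Real.pi * b j := by
  have key : ∀ θ : ℝ, Complex.exp (j*θ*I) * ∑' k, b k * Complex.exp (-(k*θ*I))
      = ∑' k, b k * Complex.exp ((((j:ℤ)-(k:ℤ) : ℤ) : ℂ)*θ*I) := by
    intro θ
    rw [← tsum_mul_left]
    refine tsum_congr fun k => ?_
    rw [show (((((j:ℤ)-(k:ℤ) : ℤ)):ℂ)*θ*I) = (j*θ*I) + (-(k*θ*I)) by push_cast; ring, Complex.exp_add]
    ring
  simp only [key]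
  rw [swapIntegral _ (fun k => ‖b k‖) (fun k => by fun_prop)
    (fun k θ => by
      rw [norm_mul, normExp _ (by simp), mul_one]) hb]
  rw [tsum_eq_single j ?_]
  · rw [intervalIntegral.integral_const_mul, expIntegral, if_pos (by simp)]; ring
  · intro k hk
    rw [intervalIntegral.integral_const_mul, expIntegral, if_neg (by simpa [sub_eq_zero] using (Ne.symm hk)), mul_zero]

lemma myFourierCoeffConj (b : ℕ → ℂ) (hb : Summable fun k => ‖b k‖) (j : ℕ) :
    (∫ θ in (0:ℝ)..(2*Real.pi),
      Complex.exp (j*θ*I) * (starRingEnd ℂ) (∑' k, b k * Complex.exp (-(k*θ*I))))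
      = if j = 0 then 2*Real.pi * (starRingEnd ℂ) (b 0) else 0 := by
  have key : ∀ θ : ℝ, Complex.exp (j*θ*I) * (starRingEnd ℂ) (∑' k, b k * Complex.exp (-(k*θ*I)))
      = ∑' k, (starRingEnd ℂ) (b k) * Complex.exp ((((j:ℤ)+(k:ℤ) : ℤ) : ℂ)*θ*I) := by
    intro θ
    rw [conj_tsum, ← tsum_mul_left]
    refine tsum_congr fun k => ?_
    rw [map_mul, ← Complex.exp_conj]
    rw [show (starRingEnd ℂ) (-((k:ℂ)*θ*I)) = (k:ℂ)*θ*I by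
      simp [map_neg, map_mul, Complex.conj_I, Complex.conj_ofReal]]
    rw [show (((((j:ℤ)+(k:ℤ) : ℤ)):ℂ)*θ*I) = (j*θ*I) + ((k:ℂ)*θ*I) by push_cast; ring,
      Complex.exp_add]
    ring
  simp only [key]
  rw [swapIntegral _ (fun k => ‖b k‖) (fun k => by fun_prop)
    (fun k θ => by rw [norm_mul, normExp _ (by simp), mul_one, RCLike.norm_conj]) ?_]
  · rcases eq_or_ne j 0 with hj | hj
    · subst hj
      rw [tsum_eq_single 0 ?_]
      · rw [intervalIntegral.integral_const_mul, expIntegral, if_pos (by simp)]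
        simp; ring
      · intro k hk
        rw [intervalIntegral.integral_const_mul, expIntegral, if_neg (by simpa using hk), mul_zero]
    · rw [if_neg hj]
      have hz : ∀ k : ℕ, (∫ θ in (0:ℝ)..(2*Real.pi),
          (starRingEnd ℂ) (b k) * Complex.exp ((((j:ℤ)+(k:ℤ) : ℤ) : ℂ)*θ*I)) = 0 := by
        intro k
        rw [intervalIntegral.integral_const_mul, expIntegral, if_neg (by
          intro h; exact hj (by omega)), mul_zero]
      rw [tsum_congr hz, tsum_zero]
  · exact hb

lemma summable_norm_at {u : ℕ → ℂ} {s r : ℝ} (h : Summable fun k => u k * (s:ℂ)^k)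
    (h0 : 0 ≤ r) (hrs : r < s) : Summable fun k => ‖u k‖ * r^k := by
  obtain ⟨M, hM0, hM⟩ := exists_bound h
  have hs : 0 < s := lt_of_le_of_lt h0 hrs
  refine Summable.of_nonneg_of_le (fun k => by positivity) (fun k => ?_)
    ((summable_geometric_of_lt_one (by positivity : (0:ℝ) ≤ r/s)
      (by rw [div_lt_one hs]; exact hrs)).mul_left M)
  have hk := hM k
  rw [norm_mul, norm_pow, Complex.norm_real, Real.norm_eq_abs, abs_of_pos hs] at hk
  have h1 : ‖u k‖ * r^k = (‖u k‖ * s^k) * (r/s)^k := by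
    rw [div_pow]; field_simp
  rw [h1]
  exact mul_le_mul_of_nonneg_right hk (by positivity)

lemma weightedSwap (a : ℕ → ℂ) (ha : Summable fun j => ‖a j‖) (Q : ℝ → ℂ) (hQ : Continuous Q)
    (C : ℝ) (hC : ∀ θ, ‖Q θ‖ ≤ C) :
    (∫ θ in (0:ℝ)..(2*Real.pi), (∑' j, a j * Complex.exp (j*θ*I)) * Q θ)
      = ∑' j, a j * ∫ θ in (0:ℝ)..(2*Real.pi), Complex.exp (j*θ*I) * Q θ := by
  have key : ∀ θ : ℝ, (∑' j, a j * Complex.exp (j*θ*I)) * Q θ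
      = ∑' j, a j * (Complex.exp (j*θ*I) * Q θ) := by
    intro θ; rw [← tsum_mul_right]; exact tsum_congr fun j => mul_assoc _ _ _
  simp only [key]
  rw [swapIntegral _ (fun j => ‖a j‖ * C) (fun j => by fun_prop)
    (fun j θ => by
      rw [norm_mul, norm_mul, normExp _ (by simp), one_mul]
      exact mul_le_mul_of_nonneg_left (hC θ) (norm_nonneg _)) (ha.mul_right C)]
  exact tsum_congr fun j => integral_const_mul _ _

lemma integralRe {h : ℝ → ℂ} (hc : Continuous h) :
    (∫ θ in (0:ℝ)..(2*Real.pi), (h θ).re) = (∫ θ in (0:ℝ)..(2*Real.pi), h θ).re := by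
  have hle : (0:ℝ) ≤ 2*Real.pi := by positivity
  rw [integral_of_le hle, integral_of_le hle]
  exact _root_.integral_re (μ := volume.restrict (Set.Ioc 0 (2*Real.pi))) hc.integrableOn_Ioc

lemma contSeries (a : ℕ → ℂ) (ha : Summable fun j => ‖a j‖) :
    Continuous fun θ : ℝ => ∑' j, a j * Complex.exp (j*θ*I) := by
  refine continuous_tsum (fun j => by fun_prop) ha (fun j θ => ?_)
  rw [norm_mul, normExp _ (by simp), mul_one]

lemma contSeriesNeg (a : ℕ → ℂ) (ha : Summable fun j => ‖a j‖) :
    Continuous fun θ : ℝ => ∑' j, a j * Complex.exp (-(j*θ*I)) := by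
  refine continuous_tsum (fun j => by fun_prop) ha (fun j θ => ?_)
  rw [norm_mul, normExp _ (by simp), mul_one]
end Helpers

lemma expIntegralNat (j : ℕ) :
    (∫ θ in (0:ℝ)..(2*Real.pi), Complex.exp (j*θ*I)) = if j = 0 then (2*Real.pi:ℂ) else 0 := by
  have h := expIntegral (j : ℤ)
  push_cast at h
  rw [h]
  simp

lemma seriesIntegral (a : ℕ → ℂ) (ha : Summable fun j => ‖a j‖) :
    (∫ θ in (0:ℝ)..(2*Real.pi), ∑' j, a j * Complex.exp (j*θ*I)) = 2*Real.pi * a 0 := by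
  have h := weightedSwap a ha (fun _ => (1:ℂ)) continuous_const 1 (by simp)
  simp only [mul_one] at h
  rw [h, tsum_eq_single 0 ?_]
  · rw [expIntegralNat, if_pos rfl]; ring
  · intro j hj
    rw [expIntegralNat, if_neg hj, mul_zero]

/-- `F` (with Taylor coefficients `f`) satisfies Opoola's condition `T_n^α(β)`:
the series `Σ ((α+k)/α)^n f_k z^k` converges on the unit disk and its sum has
real part greater than `β` there. -/
def Tcond (α : ℝ) (n : ℕ) (β : ℝ) (f : ℕ → ℂ) : Prop :=
  ∀ z ∈ ball (0 : ℂ) 1,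
    Summable (fun k : ℕ => ((((α + k) / α) ^ n : ℝ) : ℂ) * f k * z ^ k) ∧
      β < (∑' k : ℕ, ((((α + k) / α) ^ n : ℝ) : ℂ) * f k * z ^ k).re

/-- If `F ∈ T_n^α(β)` and `Re G > 1/2` on the unit disk, then the
quasi-convolution `H z = Σ f_k g_k z^k` satisfies `T_n^α(β)`. -/
theorem stmt_7 (α : ℝ) (hα : 0 < α) (n : ℕ) (β : ℝ) (hβ0 : 0 ≤ β) (hβ1 : β < 1)
    (F : ℂ → ℂ) (hFd : DifferentiableOn ℂ F (ball (0 : ℂ) 1)) (hF0 : F 0 = 1)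
    (f : ℕ → ℂ) (hFs : ∀ z ∈ ball (0 : ℂ) 1, HasSum (fun k : ℕ => f k * z ^ k) (F z))
    (G : ℂ → ℂ) (hGd : DifferentiableOn ℂ G (ball (0 : ℂ) 1)) (hG0 : G 0 = 1)
    (g : ℕ → ℂ) (hGs : ∀ z ∈ ball (0 : ℂ) 1, HasSum (fun k : ℕ => g k * z ^ k) (G z))
    (hFT : Tcond α n β f) (hGre : ∀ z ∈ ball (0 : ℂ) 1, 1 / 2 < (G z).re) :
    Tcond α n β (fun k => f k * g k) := by
  -- coefficient values at 0
  have hf0 : f 0 = 1 := by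
    have h00 : HasSum (fun k => f k * (0:ℂ)^k) (F 0) := hFs 0 (by simp)
    have h01 : HasSum (fun k => f k * (0:ℂ)^k) (f 0) := by
      have := hasSum_single (f := fun k => f k * (0:ℂ)^k) 0
        (fun b hb => by simp [zero_pow hb])
      simpa using this
    rw [h01.unique h00, hF0]
  have hg0 : g 0 = 1 := by
    have h00 : HasSum (fun k => g k * (0:ℂ)^k) (G 0) := hGs 0 (by simp)
    have h01 : HasSum (fun k => g k * (0:ℂ)^k) (g 0) := by
      have := hasSum_single (f := fun k => g k * (0:ℂ)^k) 0
        (fun b hb => by simp [zero_pow hb])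
      simpa using this
    rw [h01.unique h00, hG0]
  have hcc0 : (((α + (0:ℕ)) / α) ^ n : ℝ) = 1 := by
    simp [div_self hα.ne']
  intro z hz
  rw [mem_ball_zero_iff] at hz
  -- radii
  set t : ℝ := (‖z‖ + 1)/2 with ht_def
  have ht0 : 0 < t := by positivity
  have hzt : ‖z‖ < t := by simp only [ht_def]; linarith
  have ht1 : t < 1 := by simp only [ht_def]; linarith
  set ρ : ℝ := Real.sqrt t with hρ_def
  have hρ0 : 0 < ρ := Real.sqrt_pos.2 ht0
  have hρρ : ρ * ρ = t := Real.mul_self_sqrt ht0.le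
  have hρ1 : ρ < 1 := by
    rw [hρ_def, show (1:ℝ) = Real.sqrt 1 by simp]
    exact Real.sqrt_lt_sqrt ht0.le ht1
  have hzρ : ‖z‖ < ρ := by nlinarith
  set s : ℝ := (ρ + 1)/2 with hs_def
  have hρs : ρ < s := by simp only [hs_def]; linarith
  have hs1 : s < 1 := by simp only [hs_def]; linarith
  have hs0 : 0 < s := lt_trans hρ0 hρs
  have hsmem : (s:ℂ) ∈ ball (0:ℂ) 1 := by
    rw [mem_ball_zero_iff, Complex.norm_real, Real.norm_eq_abs, abs_of_pos hs0]; exact hs1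
  -- summability of coefficient series
  have hu : Summable (fun k : ℕ => ((((α + k) / α) ^ n : ℝ) : ℂ) * f k * (s:ℂ)^k) :=
    (hFT _ hsmem).1
  have hgs : Summable (fun k : ℕ => g k * (s:ℂ)^k) := (hGs _ hsmem).summable
  have hAn : Summable (fun k : ℕ => ‖((((α + k) / α) ^ n : ℝ) : ℂ) * f k‖ * ρ^k) :=
    summable_norm_at hu hρ0.le hρs
  have hBn : Summable (fun k : ℕ => ‖g k‖ * (‖z‖/ρ)^k) :=
    summable_norm_at hgs (by positivity) (lt_trans (by rw [div_lt_iff₀ hρ0]; nlinarith : ‖z‖/ρ < ρ) hρs)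
  -- summability of the convolution series
  obtain ⟨M, hM0, hM⟩ := exists_bound hu
  obtain ⟨M', hM'0, hM'⟩ := exists_bound hgs
  have hH : Summable (fun k : ℕ => ((((α + k) / α) ^ n : ℝ) : ℂ) * (f k * g k) * z ^ k) := by
    refine Summable.of_norm ?_
    refine Summable.of_nonneg_of_le (fun k => norm_nonneg _) (fun k => ?_)
      (((summable_geometric_of_lt_one (by positivity : (0:ℝ) ≤ ‖z‖/(s*s))
        (by rw [div_lt_one (by positivity)]; nlinarith)).mul_left (M * M')))
    have h1 := hM k
    have h2 := hM' k
    rw [norm_mul, norm_pow, Complex.norm_real, Real.norm_eq_abs, abs_of_pos hs0] at h1 h2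
    have hnorm : ‖((((α + k) / α) ^ n : ℝ) : ℂ) * (f k * g k) * z ^ k‖
        = ‖((((α + k) / α) ^ n : ℝ) : ℂ) * f k‖ * ‖g k‖ * ‖z‖^k := by
      rw [norm_mul, norm_mul, norm_mul, norm_mul, norm_pow]
      ring
    rw [hnorm]
    have e1 : ‖((((α + k) / α) ^ n : ℝ) : ℂ) * f k‖ * ‖g k‖ * ‖z‖^k
        = (‖((((α + k) / α) ^ n : ℝ) : ℂ) * f k‖ * s^k) * (‖g k‖ * s^k) * (‖z‖/(s*s))^k := by
      rw [div_pow ‖z‖ (s*s) k, mul_pow s s k, ← mul_div_assoc, eq_div_iff (by positivity : (s:ℝ)^k * s^k ≠ 0)]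
      ring
    rw [e1]
    have := mul_le_mul h1 h2 (by positivity) hM0
    exact mul_le_mul_of_nonneg_right this (by positivity)
  refine ⟨hH, ?_⟩
  -- the series coefficient functions on the circle of radius ρ
  set w : ℂ := z / (ρ:ℂ) with hw_def
  have hρC : ((ρ:ℝ):ℂ) ≠ 0 := Complex.ofReal_ne_zero.2 hρ0.ne'
  have hwnorm : ‖w‖ = ‖z‖/ρ := by
    rw [hw_def, norm_div, Complex.norm_real, Real.norm_eq_abs, abs_of_pos hρ0]
  have hw1 : ‖w‖ < 1 := by
    rw [hwnorm, div_lt_one hρ0]; exact hzρ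
  set A : ℕ → ℂ := fun k => ((((α + k) / α) ^ n : ℝ) : ℂ) * f k * ((ρ:ℝ):ℂ)^k with hA_def
  set B : ℕ → ℂ := fun k => g k * w^k with hB_def
  have hAn' : Summable fun k => ‖A k‖ := by
    refine hAn.congr fun k => ?_
    simp only [hA_def]
    rw [norm_mul (((((α + k) / α) ^ n : ℝ) : ℂ) * f k) (((ρ:ℝ):ℂ)^k), norm_pow,
      Complex.norm_real, Real.norm_eq_abs, abs_of_pos hρ0]
  have hBn' : Summable fun k => ‖B k‖ := by
    refine hBn.congr fun k => ?_
    simp only [hB_def]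
    rw [norm_mul (g k) (w^k), norm_pow, hwnorm]
  have hA0 : A 0 = 1 := by
    simp only [hA_def, pow_zero, mul_one, hf0, Nat.cast_zero, add_zero]
    rw [div_self hα.ne', one_pow]; norm_num
  have hB0 : B 0 = 1 := by simp [hB_def, hg0]
  set PS : ℝ → ℂ := fun θ => ∑' k, A k * Complex.exp (k*θ*I) with hPS_def
  set GS : ℝ → ℂ := fun θ => ∑' k, B k * Complex.exp (-(k*θ*I)) with hGS_def
  set QS : ℝ → ℂ := fun θ => GS θ + (starRingEnd ℂ) (GS θ) with hQS_def
  have hmem1 : ∀ θ:ℝ, ((ρ:ℝ):ℂ) * Complex.exp ((θ:ℂ)*I) ∈ ball (0:ℂ) 1 := by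
    intro θ
    rw [mem_ball_zero_iff, norm_mul, Complex.norm_real, Real.norm_eq_abs, abs_of_pos hρ0,
      normExp _ (by simp), mul_one]
    exact hρ1
  have hmem2 : ∀ θ:ℝ, w * Complex.exp (-((θ:ℂ)*I)) ∈ ball (0:ℂ) 1 := by
    intro θ
    rw [mem_ball_zero_iff, norm_mul, normExp _ (by simp), mul_one]
    exact hw1
  have hPSre : ∀ θ:ℝ, β < (PS θ).re := by
    intro θ
    have h2 := (hFT _ (hmem1 θ)).2
    have he : PS θ = ∑' k : ℕ, ((((α + k) / α) ^ n : ℝ) : ℂ) * f k * (((ρ:ℝ):ℂ) * Complex.exp ((θ:ℂ)*I))^k := by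
      simp only [hPS_def, hA_def]
      refine tsum_congr fun k => ?_
      rw [mul_pow, ← Complex.exp_nat_mul,
        show (k:ℂ)*((θ:ℂ)*I) = (k:ℂ)*θ*I from (mul_assoc _ _ _).symm]
      ring
    rw [he]
    exact h2
  have hGSeq : ∀ θ:ℝ, GS θ = G (w * Complex.exp (-((θ:ℂ)*I))) := by
    intro θ
    rw [← (hGs _ (hmem2 θ)).tsum_eq]
    simp only [hGS_def, hB_def]
    refine tsum_congr fun k => ?_
    rw [mul_pow, ← Complex.exp_nat_mul, show (k:ℂ)*(-((θ:ℂ)*I)) = -((k:ℂ)*θ*I) by ring]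
    ring
  have hGSre : ∀ θ:ℝ, 1/2 < (GS θ).re := by
    intro θ; rw [hGSeq θ]; exact hGre _ (hmem2 θ)
  -- continuity
  have hPSc : Continuous PS := by rw [hPS_def]; exact contSeries A hAn'
  have hGSc : Continuous GS := by rw [hGS_def]; exact contSeriesNeg B hBn'
  have hQSc : Continuous QS := by rw [hQS_def]; exact hGSc.add (continuous_star.comp hGSc)
  -- uniform bound for QS
  set C0 : ℝ := ∑' k, ‖B k‖ with hC0_def
  have hGSb : ∀ θ:ℝ, ‖GS θ‖ ≤ C0 := by
    intro θ
    have hnm : ∀ k:ℕ, ‖B k * Complex.exp (-((k:ℂ)*θ*I))‖ = ‖B k‖ := by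
      intro k
      rw [norm_mul (B k) (Complex.exp _), normExp _ (by simp), mul_one]
    have h1 : ‖GS θ‖ ≤ ∑' k, ‖B k * Complex.exp (-((k:ℂ)*θ*I))‖ := by
      simp only [hGS_def]
      exact norm_tsum_le_tsum_norm (hBn'.congr fun k => (hnm k).symm)
    exact le_trans h1 (le_of_eq (tsum_congr hnm))
  have hQSb : ∀ θ:ℝ, ‖QS θ‖ ≤ 2*C0 := by
    intro θ
    rw [hQS_def]
    refine le_trans (norm_add_le _ _) ?_
    rw [RCLike.norm_conj]
    linarith [hGSb θ]
  -- Fourier coefficient computations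
  have hIQ : ∀ j:ℕ, (∫ θ in (0:ℝ)..(2*Real.pi), Complex.exp (j*θ*I) * QS θ)
      = 2*Real.pi * B j + (if j = 0 then (2*Real.pi:ℂ) else 0) := by
    intro j
    have hsplit : ∀ θ:ℝ, Complex.exp ((j:ℂ)*θ*I) * QS θ
        = Complex.exp ((j:ℂ)*θ*I) * GS θ + Complex.exp ((j:ℂ)*θ*I) * (starRingEnd ℂ) (GS θ) := by
      intro θ; rw [hQS_def]; ring
    simp only [hsplit]
    have i1 : IntervalIntegrable (fun θ:ℝ => Complex.exp ((j:ℂ)*θ*I) * GS θ)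
        MeasureTheory.volume 0 (2*Real.pi) :=
      ((contExpMul (j:ℂ)).mul hGSc).intervalIntegrable _ _
    have i2 : IntervalIntegrable (fun θ:ℝ => Complex.exp ((j:ℂ)*θ*I) * (starRingEnd ℂ) (GS θ))
        MeasureTheory.volume 0 (2*Real.pi) :=
      ((contExpMul (j:ℂ)).mul (continuous_star.comp hGSc)).intervalIntegrable _ _
    rw [intervalIntegral.integral_add i1 i2]
    simp only [hGS_def]
    rw [myFourierCoeff B hBn' j, myFourierCoeffConj B hBn' j, hB0, map_one, mul_one]
  have hPQ : (∫ θ in (0:ℝ)..(2*Real.pi), PS θ * QS θ)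
      = 2*Real.pi * (∑' k : ℕ, ((((α + k) / α) ^ n : ℝ) : ℂ) * (f k * g k) * z ^ k)
        + 2*Real.pi := by
    simp only [hPS_def]
    rw [weightedSwap A hAn' QS hQSc (2*C0) hQSb]
    have hterm : ∀ j:ℕ, A j * ∫ θ in (0:ℝ)..(2*Real.pi), Complex.exp (j*θ*I) * QS θ
        = 2*Real.pi * (((((α + j) / α) ^ n : ℝ) : ℂ) * (f j * g j) * z ^ j)
          + (if j = 0 then (2*Real.pi:ℂ) else 0) := by
      intro j
      rw [hIQ j, mul_add]
      have hAB : A j * B j = ((((α + j) / α) ^ n : ℝ) : ℂ) * (f j * g j) * z ^ j := by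
        simp only [hA_def, hB_def]
        rw [show ((((α + j) / α) ^ n : ℝ) : ℂ) * f j * ((ρ:ℝ):ℂ)^j * (g j * w^j)
            = ((((α + j) / α) ^ n : ℝ) : ℂ) * (f j * g j) * (((ρ:ℝ):ℂ)^j * w^j) by ring]
        rw [← mul_pow, hw_def, mul_div_cancel₀ _ hρC]
      congr 1
      · rw [← hAB]; ring
      · rcases eq_or_ne j 0 with hj | hj
        · subst hj
          simp only [if_pos rfl, hA0, one_mul]
        · simp only [if_neg hj, mul_zero]
    rw [tsum_congr hterm, Summable.tsum_add (hH.mul_left (2*(Real.pi:ℂ))) ?_, tsum_mul_left, tsum_ite_eq]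
    exact summable_of_ne_finset_zero (s := {0}) (fun j hj => by
      rw [if_neg (by simpa using hj)])
  have hPint : (∫ θ in (0:ℝ)..(2*Real.pi), PS θ) = 2*Real.pi := by
    simp only [hPS_def]
    rw [seriesIntegral A hAn', hA0, mul_one]
  have hQint : (∫ θ in (0:ℝ)..(2*Real.pi), QS θ) = 4*Real.pi := by
    have h0 := hIQ 0
    simp only [Nat.cast_zero, zero_mul, Complex.exp_zero, one_mul, if_pos rfl, hB0, mul_one] at h0
    rw [h0]
    push_cast; ring
  -- pass to real parts
  have hqre : ∀ θ:ℝ, (QS θ).re = 2*(GS θ).re := by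
    intro θ; rw [hQS_def]; simp [Complex.add_re, Complex.conj_re]; ring
  have hpq : ∀ θ:ℝ, (PS θ * QS θ).re = (PS θ).re * (2*(GS θ).re) := by
    intro θ
    have hc : QS θ = ((2*(GS θ).re : ℝ):ℂ) := by rw [hQS_def]; exact Complex.add_conj _
    rw [hc]
    simp [Complex.mul_re]
  have pc : Continuous fun θ:ℝ => (PS θ).re := Complex.continuous_re.comp hPSc
  have qc : Continuous fun θ:ℝ => 2*(GS θ).re :=
    continuous_const.mul (Complex.continuous_re.comp hGSc)
  have hJ : (∫ θ in (0:ℝ)..(2*Real.pi), (PS θ).re * (2*(GS θ).re))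
      = 2*Real.pi * (∑' k : ℕ, ((((α + k) / α) ^ n : ℝ) : ℂ) * (f k * g k) * z ^ k).re
        + 2*Real.pi := by
    have he : (fun θ:ℝ => (PS θ).re * (2*(GS θ).re)) = fun θ => (PS θ * QS θ).re :=
      funext fun θ => (hpq θ).symm
    rw [he, integralRe (h := fun θ => PS θ * QS θ) (hPSc.mul hQSc), hPQ]
    simp [Complex.add_re, Complex.mul_re]
  have hpint : (∫ θ in (0:ℝ)..(2*Real.pi), (PS θ).re) = 2*Real.pi := by
    rw [integralRe hPSc, hPint]
    simp
  have hqint : (∫ θ in (0:ℝ)..(2*Real.pi), 2*(GS θ).re) = 4*Real.pi := by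
    have he : (fun θ:ℝ => 2*(GS θ).re) = fun θ => (QS θ).re := funext fun θ => (hqre θ).symm
    rw [he, integralRe hQSc, hQint]
    simp
  have hpos : 0 < ∫ θ in (0:ℝ)..(2*Real.pi), ((PS θ).re - β) * (2*(GS θ).re - 1) := by
    refine intervalIntegral_pos_of_pos_on
      (((pc.sub continuous_const).mul (qc.sub continuous_const)).intervalIntegrable _ _)
      (fun θ _ => mul_pos (sub_pos.2 (hPSre θ)) (sub_pos.2 (by linarith [hGSre θ])))
      (by positivity)
  have hexpand : (∫ θ in (0:ℝ)..(2*Real.pi), ((PS θ).re - β) * (2*(GS θ).re - 1))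
      = (∫ θ in (0:ℝ)..(2*Real.pi), (PS θ).re * (2*(GS θ).re))
        - (∫ θ in (0:ℝ)..(2*Real.pi), (PS θ).re)
        - β * (∫ θ in (0:ℝ)..(2*Real.pi), 2*(GS θ).re) + β * (2*Real.pi) := by
    have he : (fun θ:ℝ => ((PS θ).re - β) * (2*(GS θ).re - 1))
        = fun θ => ((PS θ).re * (2*(GS θ).re) - (PS θ).re - β * (2*(GS θ).re)) + β :=
      funext fun θ => by ring
    rw [he, intervalIntegral.integral_add
      (f := fun θ => (PS θ).re * (2*(GS θ).re) - (PS θ).re - β * (2*(GS θ).re))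
      (((((pc.mul qc).sub pc)).sub (continuous_const.mul qc)).intervalIntegrable _ _)
      (intervalIntegrable_const),
      intervalIntegral.integral_sub
      (f := fun θ => (PS θ).re * (2*(GS θ).re) - (PS θ).re) (g := fun θ => β * (2*(GS θ).re))
      (((pc.mul qc).sub pc).intervalIntegrable _ _)
      ((continuous_const.mul qc).intervalIntegrable _ _),
      intervalIntegral.integral_sub (f := fun θ => (PS θ).re * (2*(GS θ).re)) ((pc.mul qc).intervalIntegrable _ _)
      (pc.intervalIntegrable _ _),
      intervalIntegral.integral_const_mul, intervalIntegral.integral_const]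
    simp only [smul_eq_mul, sub_zero]
    ring
  rw [hexpand, hJ, hpint, hqint] at hpos
  nlinarith [Real.pi_pos, hpos]
end

section
/- Let σ, γ > 0 be real. Then for every z in the unit disk E = {z ∈ ℂ : |z| < 1}, Re[ (Γ(σ+γ+1)/(Γ(σ+1)Γ(γ+1))) · σ ∫₀¹ (1 − s)^{σ−1} s^{γ−1}/(1 − s z) ds ] > 1/2. -/
open Complex Metric MeasureTheory

set_option maxHeartbeats 1000000 in
/-- For real `σ, γ > 0` and `z` in the unit disk,
`Re [C(σ+γ,γ) σ ∫₀¹ (1-s)^(σ-1) s^(γ-1)/(1 - s z) ds] > 1/2`. -/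
theorem stmt_16 (σ γ : ℝ) (hσ : 0 < σ) (hγ : 0 < γ) :
    ∀ z ∈ ball (0 : ℂ) 1,
      1 / 2 < (((Real.Gamma (σ + γ + 1) /
            (Real.Gamma (σ + 1) * Real.Gamma (γ + 1)) * σ : ℝ) : ℂ) *
        ∫ s in (0 : ℝ)..1, (((1 - s) ^ (σ - 1) * s ^ (γ - 1) : ℝ) : ℂ) /
          (1 - (s : ℂ) * z)).re := by
  intro z hz
  rw [mem_ball, dist_zero_right] at hz
  set w : ℝ → ℝ := fun s => (1 - s) ^ (σ - 1) * s ^ (γ - 1) with hw_def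
  set f : ℝ → ℂ := fun s => ((w s : ℝ) : ℂ) / (1 - (s : ℂ) * z) with hf_def
  set r : ℝ := Real.Gamma (σ + γ + 1) / (Real.Gamma (σ + 1) * Real.Gamma (γ + 1)) * σ with hr_def
  -- coercion of w equals the beta integrand on [0,1]
  have hcoe : ∀ s ∈ Set.Icc (0 : ℝ) 1,
      ((w s : ℝ) : ℂ) = (s : ℂ) ^ ((γ : ℂ) - 1) * (1 - (s : ℂ)) ^ ((σ : ℂ) - 1) := by
    intro s hs
    have h1 : ((γ : ℂ) - 1) = ((γ - 1 : ℝ) : ℂ) := by push_cast; ring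
    have h2 : ((σ : ℂ) - 1) = ((σ - 1 : ℝ) : ℂ) := by push_cast; ring
    have h3 : (1 - (s : ℂ)) = (((1 - s : ℝ)) : ℂ) := by push_cast; ring
    rw [h1, h2, h3, ← Complex.ofReal_cpow hs.1, ← Complex.ofReal_cpow (by linarith [hs.2])]
    rw [Complex.ofReal_mul, mul_comm]
  -- integrability of the coerced w
  have hbeta : IntervalIntegrable
      (fun x : ℝ => (x : ℂ) ^ ((γ : ℂ) - 1) * (1 - (x : ℂ)) ^ ((σ : ℂ) - 1)) volume 0 1 :=
    Complex.betaIntegral_convergent (u := (γ:ℂ)) (v := (σ:ℂ)) (by simpa using hγ) (by simpa using hσ)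
  have hwc : IntervalIntegrable (fun s : ℝ => ((w s : ℝ) : ℂ)) volume 0 1 := by
    rw [intervalIntegrable_iff'] at hbeta ⊢
    refine hbeta.congr_fun ?_ measurableSet_uIcc
    intro s hs
    rw [Set.uIcc_of_le (by norm_num : (0:ℝ) ≤ 1)] at hs
    exact (hcoe s hs).symm
  -- integrability of w itself
  have hw : IntervalIntegrable w volume 0 1 := by
    rw [intervalIntegrable_iff] at hwc ⊢
    exact hwc.re.congr (Filter.Eventually.of_forall fun s => by simp)
  -- the denominator never vanishes, with positivity facts
  have hden : ∀ s ∈ Set.Icc (0 : ℝ) 1, (1 : ℂ) - (s : ℂ) * z ≠ 0 := by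
    intro s hs h
    have h1 : ‖(s : ℂ) * z‖ < 1 := by
      rw [norm_mul, Complex.norm_real]
      calc ‖s‖ * ‖z‖ ≤ 1 * ‖z‖ := by
            apply mul_le_mul_of_nonneg_right _ (norm_nonneg z)
            rw [Real.norm_eq_abs, _root_.abs_of_nonneg hs.1]; exact hs.2
        _ < 1 := by simpa using hz
    have : (s : ℂ) * z = 1 := by linear_combination -h
    rw [this] at h1; simp at h1
  -- continuity of the inverse factor
  have hcont : ContinuousOn (fun s : ℝ => ((1 : ℂ) - (s : ℂ) * z)⁻¹) (Set.uIcc (0:ℝ) 1) := by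
    rw [Set.uIcc_of_le (by norm_num : (0:ℝ) ≤ 1)]
    apply ContinuousOn.inv₀
    · fun_prop
    · exact hden
  -- integrability of f
  have hf : IntervalIntegrable f volume 0 1 := by
    have := hwc.mul_continuousOn hcont
    refine this.congr ?_
    intro s _
    simp [hf_def, div_eq_mul_inv]
  have hfre : IntervalIntegrable (fun s => (f s).re) volume 0 1 := by
    rw [intervalIntegrable_iff] at hf ⊢
    exact hf.re.congr (Filter.Eventually.of_forall fun s => by simp)
  -- pointwise lower bound : (f s).re ≥ w s / 2 on [0,1]
  have hpt : ∀ s ∈ Set.Icc (0 : ℝ) 1, w s * (1/2) ≤ (f s).re := by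
    intro s hs
    have hwnn : 0 ≤ w s := by
      apply mul_nonneg <;> apply Real.rpow_nonneg
      · linarith [hs.2]
      · exact hs.1
    have hd := hden s hs
    set c : ℂ := 1 - (s : ℂ) * z with hc
    have hns : 0 < Complex.normSq c := Complex.normSq_pos.2 hd
    have hre : (1:ℝ)/2 ≤ c⁻¹.re := by
      rw [Complex.inv_re, le_div_iff₀ hns]
      have hcre : c.re = 1 - s * z.re := by simp [hc]
      have hnsq : Complex.normSq c = 1 - 2 * (s * z.re) + s^2 * Complex.normSq z := by
        simp [hc, Complex.normSq_apply]
        ring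
      have hzlt : Complex.normSq z < 1 := by
        rw [Complex.normSq_eq_norm_sq]
        nlinarith [norm_nonneg z, hz]
      have hs2 : s^2 ≤ 1 := by nlinarith [hs.1, hs.2]
      have : s^2 * Complex.normSq z ≤ 1 := by
        nlinarith [Complex.normSq_nonneg z, hs.1]
      rw [hcre, hnsq]
      nlinarith
    have : (f s).re = w s * c⁻¹.re := by
      rw [hf_def]
      simp only [div_eq_mul_inv, ← hc]
      exact Complex.re_ofReal_mul _ _
    rw [this]
    exact mul_le_mul_of_nonneg_left hre hwnn
  -- integral comparison
  have hmono : (∫ s in (0:ℝ)..1, w s) * (1/2) ≤ ∫ s in (0:ℝ)..1, (f s).re := by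
    rw [← intervalIntegral.integral_mul_const]
    exact intervalIntegral.integral_mono_on (by norm_num) (hw.mul_const _) hfre hpt
  -- value of ∫ w
  have hΓσγ : 0 < Real.Gamma (σ + γ) := Real.Gamma_pos_of_pos (by linarith)
  have hB : (∫ s in (0:ℝ)..1, w s) = Real.Gamma γ * Real.Gamma σ / Real.Gamma (σ + γ) := by
    have h := Complex.Gamma_mul_Gamma_eq_betaIntegral
      (s := (γ:ℂ)) (t := (σ:ℂ)) (by simpa using hγ) (by simpa using hσ)
    have hint : Complex.betaIntegral (γ:ℂ) (σ:ℂ) = ((∫ s in (0:ℝ)..1, w s : ℝ) : ℂ) := by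
      rw [Complex.betaIntegral, ← intervalIntegral.integral_ofReal]
      refine intervalIntegral.integral_congr ?_
      intro s hs
      rw [Set.uIcc_of_le (by norm_num : (0:ℝ) ≤ 1)] at hs
      exact (hcoe s hs).symm
    rw [hint] at h
    have hcast : ((γ:ℂ) + (σ:ℂ)) = ((γ + σ : ℝ) : ℂ) := by push_cast; ring
    rw [Complex.Gamma_ofReal, Complex.Gamma_ofReal, hcast, Complex.Gamma_ofReal] at h
    have h' : Real.Gamma γ * Real.Gamma σ
        = Real.Gamma (γ + σ) * (∫ s in (0:ℝ)..1, w s) := by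
      exact_mod_cast h
    have hcomm : γ + σ = σ + γ := by ring
    rw [hcomm] at h'
    field_simp
    linarith [h']
  -- reduce goal to real arithmetic
  have hrepr : (((r : ℝ) : ℂ) * ∫ s in (0:ℝ)..1, f s).re = r * ∫ s in (0:ℝ)..1, (f s).re := by
    rw [Complex.re_ofReal_mul]
    congr 1
    rw [intervalIntegral.integral_of_le (by norm_num : (0:ℝ) ≤ 1),
        intervalIntegral.integral_of_le (by norm_num : (0:ℝ) ≤ 1)]
    rw [intervalIntegrable_iff] at hf
    have := integral_re (hf.mono_set (by rw [Set.uIoc_of_le (by norm_num : (0:ℝ) ≤ 1)]))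
    simpa using this.symm
  rw [hrepr]
  -- positivity of r and value of r * B
  have hΓσ := Real.Gamma_pos_of_pos hσ
  have hΓγ := Real.Gamma_pos_of_pos hγ
  have hΓσ1 : Real.Gamma (σ + 1) = σ * Real.Gamma σ := Real.Gamma_add_one hσ.ne'
  have hΓγ1 : Real.Gamma (γ + 1) = γ * Real.Gamma γ := Real.Gamma_add_one hγ.ne'
  have hΓσγ1 : Real.Gamma (σ + γ + 1) = (σ + γ) * Real.Gamma (σ + γ) :=
    Real.Gamma_add_one (by positivity)
  have hrpos : 0 < r := by
    rw [hr_def, hΓσ1, hΓγ1, hΓσγ1]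
    positivity
  have hrB : r * (∫ s in (0:ℝ)..1, w s) = (σ + γ) / γ := by
    rw [hB, hr_def, hΓσ1, hΓγ1, hΓσγ1]
    field_simp
  have h1 : r * ((∫ s in (0:ℝ)..1, w s) * (1/2)) ≤ r * ∫ s in (0:ℝ)..1, (f s).re :=
    mul_le_mul_of_nonneg_left hmono hrpos.le
  have h2 : (1:ℝ)/2 < r * ((∫ s in (0:ℝ)..1, w s) * (1/2)) := by
    rw [← mul_assoc, hrB]
    rw [div_mul_eq_mul_div, lt_div_iff₀ hγ]
    nlinarith
  linarith
end

section
/- Let α > 0 and c be real numbers with α + c > 0, let n ≥ 0 be an integer, and let 0 ≤ β < 1. Suppose F is analytic on E with F(0) = 1 and F satisfies condition T_n^α(β). Define Φ : E → ℂ by Φ(z) = (α + c) ∫₀¹ s^{α+c−1} F(s z) ds (the integral over the real variable s ∈ (0,1)). Then Φ is analytic on E with Φ(0) = 1, and Φ satisfies condition T_n^α(β). -/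
open Complex Metric

/-- The `k`-th Taylor coefficient of `F` at `0`. -/
noncomputable def taylorCoeff (F : ℂ → ℂ) (k : ℕ) : ℂ :=
  iteratedDeriv k F 0 / (k.factorial : ℂ)

/-- `F` satisfies Opoola's condition `T_n^α(β)`: the series
`Σ ((α+k)/α)^n c_k z^k` (with `c_k` the Taylor coefficients of `F` at `0`)
converges on the unit disk and its sum has real part greater than `β` there. -/
def TcondF (α : ℝ) (n : ℕ) (β : ℝ) (F : ℂ → ℂ) : Prop :=
  ∀ z ∈ ball (0 : ℂ) 1,
    Summable (fun k : ℕ => ((((α + k) / α) ^ n : ℝ) : ℂ) * taylorCoeff F k * z ^ k) ∧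
      β < (∑' k : ℕ, ((((α + k) / α) ^ n : ℝ) : ℂ) * taylorCoeff F k * z ^ k).re

open MeasureTheory in
lemma aux_rpow_integrableOn {q : ℝ} (hq : -1 < q) :
    IntegrableOn (fun s : ℝ => s ^ q) (Set.Ioc (0:ℝ) 1) := by
  have := intervalIntegral.intervalIntegrable_rpow' (a := 0) (b := 1) hq
  rwa [intervalIntegrable_iff_integrableOn_Ioc_of_le zero_le_one] at this

open MeasureTheory in
lemma aux_rpow_integral {q : ℝ} (hq : -1 < q) :
    ∫ s in Set.Ioc (0:ℝ) 1, s ^ q = 1 / (q + 1) := by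
  rw [← intervalIntegral.integral_of_le zero_le_one,
    integral_rpow (Or.inl hq), Real.one_rpow,
    Real.zero_rpow (by linarith : q + 1 ≠ 0)]
  ring

open MeasureTheory in
/-- Key swap lemma: the Bernardi integral transform acts on the coefficients of a
power series by multiplication with `(α+c)/(α+c+k)`. -/
lemma bernardi_hasSum (α c : ℝ) (hac : 0 < α + c) (a : ℕ → ℂ) (g : ℂ → ℂ) (z : ℂ)
    (hg : ∀ s : ℝ, s ∈ Set.Ioc (0:ℝ) 1 →
      HasSum (fun k : ℕ => a k * ((s : ℂ) * z) ^ k) (g ((s : ℂ) * z)))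
    (ha : Summable (fun k : ℕ => ‖a k * z ^ k‖)) :
    HasSum (fun k : ℕ => ((((α + c) / (α + c + k)) : ℝ) : ℂ) * (a k * z ^ k))
      (((α + c : ℝ) : ℂ) * ∫ s in (0:ℝ)..1, ((s ^ (α + c - 1) : ℝ) : ℂ) * g ((s : ℂ) * z)) := by
  set μ := volume.restrict (Set.Ioc (0:ℝ) 1) with hμ
  set f : ℕ → ℝ → ℂ := fun k s => ((s ^ (α + c - 1 + k) : ℝ) : ℂ) * (a k * z ^ k) with hf
  have hqk : ∀ k : ℕ, (-1 : ℝ) < α + c - 1 + k := fun k => by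
    have : (0:ℝ) ≤ k := Nat.cast_nonneg k
    linarith
  have hqk' : ∀ k : ℕ, (0:ℝ) < α + c + k := fun k => by
    have : (0:ℝ) ≤ k := Nat.cast_nonneg k
    linarith
  have hint : ∀ k, Integrable (f k) μ := by
    intro k
    have h1 : Integrable (fun s : ℝ => s ^ (α + c - 1 + k)) μ := aux_rpow_integrableOn (hqk k)
    have := h1.smul_const (a k * z ^ k)
    simpa only [hf, Complex.real_smul] using this
  have hval : ∀ k, ∫ s, f k s ∂μ = ((1 / (α + c + k) : ℝ) : ℂ) * (a k * z ^ k) := by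
    intro k
    simp only [hf, ← Complex.real_smul]
    rw [integral_smul_const]
    have : ∫ s, s ^ (α + c - 1 + k) ∂μ = 1 / (α + c + k) := by
      rw [hμ]
      rw [aux_rpow_integral (hqk k)]
      ring_nf
    rw [this]
  have hnormval : ∀ k, ∫ s, ‖f k s‖ ∂μ = (1 / (α + c + k)) * ‖a k * z ^ k‖ := by
    intro k
    have hcongr : ∀ s ∈ Set.Ioc (0:ℝ) 1,
        ‖f k s‖ = s ^ (α + c - 1 + k) * ‖a k * z ^ k‖ := by
      intro s hs
      simp only [hf, norm_mul, Complex.norm_real, Real.norm_eq_abs,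
        _root_.abs_of_nonneg (Real.rpow_nonneg hs.1.le _)]
    rw [hμ, setIntegral_congr_fun measurableSet_Ioc hcongr,
      MeasureTheory.integral_mul_const, aux_rpow_integral (hqk k)]
    ring_nf
  have hsum : Summable (fun k => ∫ s, ‖f k s‖ ∂μ) := by
    apply Summable.of_nonneg_of_le
      (fun k => integral_nonneg fun s => norm_nonneg _)
      (fun k => ?_) (ha.mul_left (1 / (α + c)))
    rw [hnormval k]
    have h1 : 1 / (α + c + k) ≤ 1 / (α + c) := by
      apply one_div_le_one_div_of_le hac
      have : (0:ℝ) ≤ k := Nat.cast_nonneg k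
      linarith
    exact mul_le_mul_of_nonneg_right h1 (norm_nonneg _)
  have hkey := MeasureTheory.hasSum_integral_of_summable_integral_norm hint hsum
  have htsum : ∀ s ∈ Set.Ioc (0:ℝ) 1,
      ∑' k, f k s = ((s ^ (α + c - 1) : ℝ) : ℂ) * g ((s : ℂ) * z) := by
    intro s hs
    have h1 : ∀ k : ℕ,
        f k s = ((s ^ (α + c - 1) : ℝ) : ℂ) * (a k * ((s : ℂ) * z) ^ k) := by
      intro k
      have h2 : s ^ (α + c - 1 + k) = s ^ (α + c - 1) * s ^ (k : ℕ) := by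
        rw [← Real.rpow_natCast s k, ← Real.rpow_add hs.1]
      simp only [hf, h2, Complex.ofReal_mul, mul_pow, ← Complex.ofReal_pow]
      ring
    rw [tsum_congr h1, tsum_mul_left, (hg s hs).tsum_eq]
  have hkey2 := hkey.mul_left ((α + c : ℝ) : ℂ)
  have e1 : (fun k : ℕ => ((α + c : ℝ) : ℂ) * ∫ s, f k s ∂μ)
      = fun k : ℕ => ((((α + c) / (α + c + k)) : ℝ) : ℂ) * (a k * z ^ k) := by
    funext k
    rw [hval k]
    push_cast
    ring
  have e2 : ∫ s, ∑' k, f k s ∂μ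
      = ∫ s in (0:ℝ)..1, ((s ^ (α + c - 1) : ℝ) : ℂ) * g ((s : ℂ) * z) := by
    rw [intervalIntegral.integral_of_le zero_le_one, hμ]
    exact setIntegral_congr_fun measurableSet_Ioc htsum
  rw [← e1, ← e2]
  exact hkey2

lemma aux_eball_one : Metric.eball (0:ℂ) 1 = Metric.ball (0:ℂ) 1 := by
  rw [show (1:ENNReal) = ((1:NNReal) : ENNReal) by norm_cast, Metric.emetric_ball_nnreal]
  norm_num

/-- A function given by a power series with coefficients `b` on the unit disk has
`ofScalars ℂ b` as convergent power series there. -/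
lemma aux_hasFPS (b : ℕ → ℂ) (g : ℂ → ℂ)
    (h : ∀ z : ℂ, ‖z‖ < 1 → HasSum (fun k : ℕ => b k * z ^ k) (g z)) :
    HasFPowerSeriesOnBall g (FormalMultilinearSeries.ofScalars ℂ b) 0 1 := by
  constructor
  · apply ENNReal.le_of_forall_nnreal_lt
    intro r hr
    apply FormalMultilinearSeries.le_radius_of_summable_norm
    have hr1 : ‖((r : ℝ) : ℂ)‖ < 1 := by
      rw [Complex.norm_real, Real.norm_eq_abs, _root_.abs_of_nonneg r.coe_nonneg]
      exact_mod_cast hr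
    have hs := summable_norm_iff.mpr (h _ hr1).summable
    refine hs.congr fun k => ?_
    rw [FormalMultilinearSeries.ofScalars_norm, norm_mul, norm_pow, Complex.norm_real,
      Real.norm_eq_abs, _root_.abs_of_nonneg r.coe_nonneg]
  · exact one_pos
  · intro y hy
    have hy1 : ‖y‖ < 1 := by
      rw [EMetric.mem_ball, edist_zero_right, ← ofReal_norm, ENNReal.ofReal_lt_one] at hy
      exact hy
    simp only [FormalMultilinearSeries.ofScalars_apply_eq, smul_eq_mul, zero_add]
    exact h y hy1

lemma aux_taylorCoeff {b : ℕ → ℂ} {g : ℂ → ℂ}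
    (h : HasFPowerSeriesOnBall g (FormalMultilinearSeries.ofScalars ℂ b) 0 1) (k : ℕ) :
    taylorCoeff g k = b k := by
  have h1 := h.factorial_smul (1 : ℂ) k
  rw [FormalMultilinearSeries.ofScalars_apply_eq] at h1
  simp only [one_pow, smul_eq_mul, mul_one, nsmul_eq_mul] at h1
  rw [taylorCoeff, iteratedDeriv_eq_iteratedFDeriv, ← h1,
    mul_div_cancel_left₀ _ (by exact_mod_cast k.factorial_ne_zero : (k.factorial : ℂ) ≠ 0)]

/-- Closure of `T_n^α(β)` under the Bernardi-type transform
`Φ z = (α+c) ∫₀¹ s^(α+c-1) F(s z) ds`. -/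
theorem stmt_17 (α c : ℝ) (hα : 0 < α) (hac : 0 < α + c) (n : ℕ)
    (β : ℝ) (hβ0 : 0 ≤ β) (hβ1 : β < 1)
    (F : ℂ → ℂ) (hFd : DifferentiableOn ℂ F (ball (0 : ℂ) 1)) (hF0 : F 0 = 1)
    (hFT : TcondF α n β F)
    (Φ : ℂ → ℂ)
    (hΦ : ∀ z : ℂ, Φ z = ((α + c : ℝ) : ℂ) *
      ∫ s in (0 : ℝ)..1, ((s ^ (α + c - 1) : ℝ) : ℂ) * F ((s : ℂ) * z)) :
    DifferentiableOn ℂ Φ (ball (0 : ℂ) 1) ∧ Φ 0 = 1 ∧ TcondF α n β Φ := by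
  classical
  -- Taylor series of F on the unit ball
  have hF_hasSum : ∀ z : ℂ, ‖z‖ < 1 →
      HasSum (fun k : ℕ => taylorCoeff F k * z ^ k) (F z) := by
    intro z hz
    have h := Complex.hasSum_taylorSeries_on_ball hFd (mem_ball_zero_iff.mpr hz)
    have e : (fun k : ℕ => (k.factorial : ℂ)⁻¹ • (z - 0) ^ k • iteratedDeriv k F 0)
        = fun k : ℕ => taylorCoeff F k * z ^ k := by
      funext k
      simp only [sub_zero, smul_eq_mul, taylorCoeff]
      ring
    rwa [e] at h
  -- helper: for s ∈ [0,1] and ‖z‖ < 1, s•z stays in the ball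
  have hsz : ∀ (z : ℂ), ‖z‖ < 1 → ∀ s : ℝ, |s| ≤ 1 → ‖(s : ℂ) * z‖ < 1 := by
    intro z hz s hs
    rw [norm_mul, Complex.norm_real, Real.norm_eq_abs]
    calc |s| * ‖z‖ ≤ 1 * ‖z‖ := mul_le_mul_of_nonneg_right hs (norm_nonneg _)
    _ = ‖z‖ := one_mul _
    _ < 1 := hz
  -- coefficients of Φ
  set c' : ℕ → ℂ := fun k => ((((α + c) / (α + c + k)) : ℝ) : ℂ) * taylorCoeff F k with hc'
  have hΦhs : ∀ z : ℂ, ‖z‖ < 1 → HasSum (fun k : ℕ => c' k * z ^ k) (Φ z) := by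
    intro z hz
    have hb := bernardi_hasSum α c hac (taylorCoeff F) F z
      (fun s hs => hF_hasSum _ (hsz z hz s (abs_le.mpr ⟨by linarith [hs.1], hs.2⟩)))
      (summable_norm_iff.mpr (hF_hasSum z hz).summable)
    have e : (fun k : ℕ => c' k * z ^ k)
        = fun k : ℕ => ((((α + c) / (α + c + k)) : ℝ) : ℂ) * (taylorCoeff F k * z ^ k) := by
      funext k; rw [hc']; ring
    rw [hΦ z, e]
    exact hb
  have hΦser : HasFPowerSeriesOnBall Φ (FormalMultilinearSeries.ofScalars ℂ c') 0 1 :=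
    aux_hasFPS c' Φ hΦhs
  have htcΦ : ∀ k, taylorCoeff Φ k = c' k := aux_taylorCoeff hΦser
  refine ⟨?_, ?_, ?_⟩
  · have := hΦser.differentiableOn
    rwa [aux_eball_one] at this
  · have h0 := hΦhs 0 (by norm_num)
    have h1 : HasSum (fun k : ℕ => c' k * (0:ℂ) ^ k) (c' 0) := by
      have := hasSum_single (f := fun k : ℕ => c' k * (0:ℂ) ^ k) 0
        (fun b hb => by simp [zero_pow hb])
      simpa using this
    rw [h0.unique h1, hc']
    simp only [Nat.cast_zero, add_zero, div_self hac.ne', taylorCoeff, iteratedDeriv_zero,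
      hF0, Nat.factorial_zero, Nat.cast_one, Complex.ofReal_one, one_mul, div_one]
  · -- the T-condition for Φ
    intro z hz'
    have hz : ‖z‖ < 1 := mem_ball_zero_iff.mp hz'
    set b : ℕ → ℂ := fun k => ((((α + k) / α) ^ n : ℝ) : ℂ) * taylorCoeff F k with hb
    set G : ℂ → ℂ := fun w => ∑' k : ℕ, b k * w ^ k with hG
    have hFT' : ∀ w : ℂ, ‖w‖ < 1 →
        Summable (fun k : ℕ => b k * w ^ k) ∧ β < (G w).re := by
      intro w hw
      have h := hFT w (mem_ball_zero_iff.mpr hw)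
      have e : (fun k : ℕ => ((((α + k) / α) ^ n : ℝ) : ℂ) * taylorCoeff F k * w ^ k)
          = fun k : ℕ => b k * w ^ k := by
        funext k; rw [hb]
      rw [e] at h
      exact h
    -- power series for G, continuity
    have hGhs : ∀ w : ℂ, ‖w‖ < 1 → HasSum (fun k : ℕ => b k * w ^ k) (G w) :=
      fun w hw => (hFT' w hw).1.hasSum
    have hGser : HasFPowerSeriesOnBall G (FormalMultilinearSeries.ofScalars ℂ b) 0 1 :=
      aux_hasFPS b G hGhs
    have hGcont : ContinuousOn G (ball (0:ℂ) 1) := by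
      have := hGser.continuousOn
      rwa [aux_eball_one] at this
    -- the Bernardi transform of G
    have hmain := bernardi_hasSum α c hac b G z
      (fun s hs => hGhs _ (hsz z hz s (abs_le.mpr ⟨by linarith [hs.1], hs.2⟩)))
      (summable_norm_iff.mpr (hFT' z hz).1)
    -- identify the terms with the Taylor coefficients of Φ
    have hfun : (fun k : ℕ => ((((α + k) / α) ^ n : ℝ) : ℂ) * taylorCoeff Φ k * z ^ k)
        = fun k : ℕ => ((((α + c) / (α + c + k)) : ℝ) : ℂ) * (b k * z ^ k) := by
      funext k
      rw [htcΦ k, hc', hb]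
      push_cast
      ring
    -- integrability of the integrand
    set Ψ : ℝ → ℂ := fun s => ((s ^ (α + c - 1) : ℝ) : ℂ) * G ((s : ℂ) * z) with hΨ
    have hcontIcc : ContinuousOn (fun s : ℝ => G ((s : ℂ) * z)) (Set.Icc (0:ℝ) 1) := by
      apply hGcont.comp ((Complex.continuous_ofReal.mul continuous_const).continuousOn)
      intro s hs
      rw [mem_ball_zero_iff]
      exact hsz z hz s (abs_le.mpr ⟨by linarith [hs.1], hs.2⟩)
    obtain ⟨M, hM⟩ := isCompact_Icc.exists_bound_of_continuousOn hcontIcc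
    have hΨmeas : MeasureTheory.AEStronglyMeasurable Ψ
        (MeasureTheory.volume.restrict (Set.Ioc (0:ℝ) 1)) := by
      apply ContinuousOn.aestronglyMeasurable ?_ measurableSet_Ioc
      apply ContinuousOn.mul
      · exact Complex.continuous_ofReal.comp_continuousOn
          (continuousOn_id.rpow_const fun x hx => Or.inl (ne_of_gt hx.1))
      · exact hcontIcc.mono Set.Ioc_subset_Icc_self
    have hΨint : MeasureTheory.Integrable Ψ
        (MeasureTheory.volume.restrict (Set.Ioc (0:ℝ) 1)) := by
      have hq : (-1:ℝ) < α + c - 1 := by linarith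
      apply MeasureTheory.Integrable.mono'
        ((aux_rpow_integrableOn hq).mul_const M) hΨmeas
      rw [MeasureTheory.ae_restrict_iff' measurableSet_Ioc]
      filter_upwards with s hs
      rw [hΨ, norm_mul, Complex.norm_real, Real.norm_eq_abs,
        _root_.abs_of_nonneg (Real.rpow_nonneg hs.1.le _)]
      exact mul_le_mul_of_nonneg_left (hM s (Set.Ioc_subset_Icc_self hs))
        (Real.rpow_nonneg hs.1.le _)
    -- real part of the integral
    have hre : (∫ s in (0:ℝ)..1, Ψ s).re
        = ∫ s in Set.Ioc (0:ℝ) 1, s ^ (α + c - 1) * (G ((s : ℂ) * z)).re := by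
      rw [intervalIntegral.integral_of_le zero_le_one]
      have hint := integral_re hΨint
      simp only [RCLike.re_to_complex] at hint
      rw [← hint]
      refine MeasureTheory.setIntegral_congr_fun measurableSet_Ioc fun s _ => ?_
      simp [hΨ, Complex.re_ofReal_mul]
    -- integrability of the real-part integrand
    have hReint : MeasureTheory.IntegrableOn
        (fun s : ℝ => s ^ (α + c - 1) * (G ((s : ℂ) * z)).re) (Set.Ioc (0:ℝ) 1) := by
      have := hΨint.re
      refine this.congr' ?_ ?_
      · exact (((continuousOn_id.rpow_const fun x hx => Or.inl (ne_of_gt hx.1)).mul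
          ((Complex.continuous_re.comp_continuousOn
            (hcontIcc.mono Set.Ioc_subset_Icc_self))))).aestronglyMeasurable measurableSet_Ioc
      · rw [MeasureTheory.ae_restrict_iff' measurableSet_Ioc]
        filter_upwards with s hs
        simp [hΨ, Complex.re_ofReal_mul]
    have hq : (-1:ℝ) < α + c - 1 := by linarith
    -- the strict inequality
    have hpos : 0 < ∫ s in Set.Ioc (0:ℝ) 1,
        s ^ (α + c - 1) * ((G ((s : ℂ) * z)).re - β) := by
      rw [← intervalIntegral.integral_of_le zero_le_one]
      apply intervalIntegral.intervalIntegral_pos_of_pos_on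
      · have e : (fun s : ℝ => s ^ (α + c - 1) * ((G ((s : ℂ) * z)).re - β))
            = fun s : ℝ => s ^ (α + c - 1) * (G ((s : ℂ) * z)).re
              - s ^ (α + c - 1) * β := by
          funext s; ring
        rw [e, intervalIntegrable_iff_integrableOn_Ioc_of_le zero_le_one]
        exact hReint.sub ((aux_rpow_integrableOn hq).mul_const β)
      · intro s hs
        have h1 : (0:ℝ) < s ^ (α + c - 1) := Real.rpow_pos_of_pos hs.1 _
        have h2 : β < (G ((s : ℂ) * z)).re :=
          (hFT' _ (hsz z hz s (abs_le.mpr ⟨by linarith [hs.1], hs.2.le⟩))).2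
        have : 0 < (G ((s : ℂ) * z)).re - β := by linarith
        positivity
      · exact zero_lt_one
    have hβval : ∫ s in Set.Ioc (0:ℝ) 1, s ^ (α + c - 1) * β = β / (α + c) := by
      rw [MeasureTheory.integral_mul_const, aux_rpow_integral hq, sub_add_cancel]
      ring
    have hsub : ∫ s in Set.Ioc (0:ℝ) 1, s ^ (α + c - 1) * ((G ((s : ℂ) * z)).re - β)
        = (∫ s in Set.Ioc (0:ℝ) 1, s ^ (α + c - 1) * (G ((s : ℂ) * z)).re)
          - ∫ s in Set.Ioc (0:ℝ) 1, s ^ (α + c - 1) * β := by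
      rw [← MeasureTheory.integral_sub hReint ((aux_rpow_integrableOn hq).mul_const β)]
      refine MeasureTheory.setIntegral_congr_fun measurableSet_Ioc fun s _ => ?_
      ring
    -- finish
    constructor
    · rw [hfun]
      exact hmain.summable
    · rw [hfun, hmain.tsum_eq, Complex.re_ofReal_mul, hre]
      have h3 : β / (α + c) < ∫ s in Set.Ioc (0:ℝ) 1,
          s ^ (α + c - 1) * (G ((s : ℂ) * z)).re := by
        rw [hsub, hβval] at hpos
        linarith
      calc β = (α + c) * (β / (α + c)) := by field_simp
      _ < (α + c) * ∫ s in Set.Ioc (0:ℝ) 1, s ^ (α + c - 1) * (G ((s : ℂ) * z)).re :=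
        mul_lt_mul_of_pos_left h3 hac
end

section
/- Let α be real with 0 < α ≤ 1, let σ > 0 be real, let n ≥ 0 be an integer, and let 0 ≤ β < 1. Suppose F is analytic on E with F(0) = 1 and F satisfies condition T_n^α(β). Define Φ : E → ℂ by Φ(z) = (2^σ/Γ(σ)) ∫₀¹ (log(1/s))^{σ−1} s^α F(s z) ds (the integral over the real variable s ∈ (0,1)). Then Φ is analytic on E and, with c_k denoting its Taylor coefficients at 0, the series Σ_{k≥0} ((α+k)/α)^n c_k z^k converges on E and its sum has real part greater than β throughout E (i.e., Φ satisfies condition T_n^α(β)). -/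
open Complex Metric

open MeasureTheory Set Complex

lemma jks_img : (fun u : ℝ => Real.exp (-u)) '' (Set.Ioi 0) = Set.Ioo (0:ℝ) 1 := by
  ext y
  constructor
  · rintro ⟨u, hu, rfl⟩
    exact ⟨Real.exp_pos _, Real.exp_lt_one_iff.mpr (by simpa using (mem_Ioi.mp hu))⟩
  · rintro ⟨h0, h1⟩
    exact ⟨-Real.log y, by simpa using Real.log_neg h0 h1, by simp [Real.exp_log h0]⟩

lemma jks_int (σ : ℝ) (hσ : 0 < σ) (c : ℝ) (hc : 0 < c) :
    IntegrableOn (fun s : ℝ => Real.log (1/s) ^ (σ-1) * s ^ c) (Ioo (0:ℝ) 1) ∧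
    ∫ s in Ioo (0:ℝ) 1, Real.log (1/s) ^ (σ-1) * s ^ c
      = Real.Gamma σ * (1/(c+1)) ^ σ := by
  set g : ℝ → ℝ := fun s => Real.log (1/s) ^ (σ-1) * s ^ c with hg
  have hder : ∀ u ∈ Ioi (0:ℝ), HasDerivWithinAt (fun u : ℝ => Real.exp (-u))
      (-Real.exp (-u)) (Ioi 0) u := by
    intro u _
    have h := (Real.hasDerivAt_exp (-u)).comp u (hasDerivAt_neg u)
    rw [mul_neg_one] at h
    exact h.hasDerivWithinAt
  have hinj : InjOn (fun u : ℝ => Real.exp (-u)) (Ioi 0) := fun a _ b _ h => by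
    have := Real.exp_injective h; linarith [this]
  have hcong : ∀ u ∈ Ioi (0:ℝ),
      |(-Real.exp (-u))| • g (Real.exp (-u)) = u ^ (σ-1) * Real.exp (-((c+1)*u)) := by
    intro u hu
    have h1 : Real.log (1 / Real.exp (-u)) = u := by
      rw [one_div, ← Real.exp_neg, neg_neg, Real.log_exp]
    have h2 : Real.exp (-u) ^ c = Real.exp (-u * c) := by
      rw [Real.rpow_def_of_pos (Real.exp_pos _), Real.log_exp]
    have h3 : |(-Real.exp (-u))| = Real.exp (-u) := by
      rw [abs_neg, abs_of_pos (Real.exp_pos _)]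
    rw [smul_eq_mul, h3, hg]
    simp only [h1, h2]
    rw [← mul_assoc, mul_comm (Real.exp (-u)) (u ^ (σ-1)), mul_assoc, ← Real.exp_add]
    ring_nf
  have hIoi : IntegrableOn (fun u : ℝ => u ^ (σ-1) * Real.exp (-((c+1)*u))) (Ioi 0) := by
    have := integrableOn_rpow_mul_exp_neg_mul_rpow (p := 1) (s := σ-1) (b := c+1)
      (by linarith) zero_lt_one (by linarith)
    refine this.congr_fun (fun x hx => ?_) measurableSet_Ioi
    dsimp only
    rw [Real.rpow_one, neg_mul]
  constructor
  · rw [← jks_img, integrableOn_image_iff_integrableOn_abs_deriv_smul measurableSet_Ioi hder hinj]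
    exact hIoi.congr_fun (fun u hu => (hcong u hu).symm) measurableSet_Ioi
  · rw [← jks_img, integral_image_eq_integral_abs_deriv_smul measurableSet_Ioi hder hinj,
      setIntegral_congr_fun measurableSet_Ioi hcong,
      Real.integral_rpow_mul_exp_neg_mul_Ioi hσ (by linarith : (0:ℝ) < c+1)]
    ring

lemma jks_swap (σ α : ℝ) (hσ : 0 < σ) (hα : 0 < α)
    (a : ℕ → ℂ) (r C : ℝ) (hr1 : r < 1) (hC : ∀ k : ℕ, ‖a k‖ * r ^ k ≤ C)
    (z : ℂ) (hz : ‖z‖ < r) :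
    HasSum (fun k : ℕ => ((Real.Gamma σ * (1/(α+(k:ℝ)+1)) ^ σ : ℝ) : ℂ) * (a k * z ^ k))
      (∫ s in Ioo (0:ℝ) 1, ((Real.log (1/s) ^ (σ-1) * s ^ α : ℝ) : ℂ) *
        (∑' k : ℕ, a k * ((s:ℂ) * z) ^ k)) ∧
    IntegrableOn (fun s : ℝ => ((Real.log (1/s) ^ (σ-1) * s ^ α : ℝ) : ℂ) *
        (∑' k : ℕ, a k * ((s:ℂ) * z) ^ k)) (Ioo (0:ℝ) 1) := by
  have hr0 : 0 < r := lt_of_le_of_lt (norm_nonneg z) hz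
  have hC0 : 0 ≤ C := le_trans (by positivity) (hC 0)
  set q : ℝ := ‖z‖ / r with hqdef
  have hq0 : 0 ≤ q := div_nonneg (norm_nonneg z) hr0.le
  have hq1 : q < 1 := (div_lt_one hr0).mpr hz
  have haq : ∀ k : ℕ, ‖a k * z ^ k‖ ≤ C * q ^ k := by
    intro k
    have hzr : ‖z‖ = q * r := by
      rw [hqdef, div_mul_cancel₀ _ hr0.ne']
    rw [norm_mul, norm_pow, hzr, mul_pow]
    calc ‖a k‖ * (q ^ k * r ^ k) = (‖a k‖ * r ^ k) * q ^ k := by ring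
    _ ≤ C * q ^ k := mul_le_mul_of_nonneg_right (hC k) (by positivity)
  set w : ℝ → ℝ := fun s => Real.log (1/s) ^ (σ-1) * s ^ α with hw
  set lam : ℕ → ℝ := fun k => Real.Gamma σ * (1/(α+(k:ℝ)+1)) ^ σ with hlam
  have hΓ : 0 < Real.Gamma σ := Real.Gamma_pos_of_pos hσ
  have hlampos : ∀ k, 0 < lam k := by
    intro k
    have h1 : (0:ℝ) < α+(k:ℝ)+1 := by positivity
    have : (0:ℝ) < (1/(α+(k:ℝ)+1)) ^ σ := Real.rpow_pos_of_pos (by positivity) σ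
    positivity
  have hlamle : ∀ k, lam k ≤ lam 0 := by
    intro k
    refine mul_le_mul_of_nonneg_left (Real.rpow_le_rpow (by positivity) ?_ hσ.le) hΓ.le
    rw [Nat.cast_zero]
    gcongr
    all_goals first | positivity | linarith [Nat.cast_nonneg (α := ℝ) k]
  have hwnn : ∀ s ∈ Ioo (0:ℝ) 1, 0 ≤ w s := by
    intro s hs
    have : 0 ≤ Real.log (1/s) := Real.log_nonneg (one_le_one_div hs.1 hs.2.le)
    have h2 : (0:ℝ) ≤ s ^ α := Real.rpow_nonneg hs.1.le α
    exact mul_nonneg (Real.rpow_nonneg this _) h2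
  have hint : ∀ k : ℕ, IntegrableOn
      (fun s : ℝ => Real.log (1/s) ^ (σ-1) * s ^ (α+(k:ℝ))) (Ioo (0:ℝ) 1) ∧
      ∫ s in Ioo (0:ℝ) 1, Real.log (1/s) ^ (σ-1) * s ^ (α+(k:ℝ)) = lam k :=
    fun k => jks_int σ hσ (α+(k:ℝ)) (by positivity)
  have key : ∀ (k : ℕ), ∀ s ∈ Ioo (0:ℝ) 1,
      ((w s : ℝ) : ℂ) * (a k * ((s:ℂ) * z) ^ k)
        = (a k * z ^ k) * ((Real.log (1/s) ^ (σ-1) * s ^ (α+(k:ℝ)) : ℝ) : ℂ) := by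
    intro k s hs
    have h1 : s ^ (α+(k:ℝ)) = s ^ α * s ^ (k:ℕ) := by
      rw [Real.rpow_add hs.1, Real.rpow_natCast]
    rw [h1, hw]
    push_cast
    ring
  set Fc : ℕ → ℝ → ℂ := fun k s => ((w s : ℝ) : ℂ) * (a k * ((s:ℂ) * z) ^ k) with hFc
  have hFcint : ∀ k, IntegrableOn (Fc k) (Ioo (0:ℝ) 1) := by
    intro k
    have h1 : IntegrableOn (fun s : ℝ => (a k * z ^ k) *
        ((Real.log (1/s) ^ (σ-1) * s ^ (α+(k:ℝ)) : ℝ) : ℂ)) (Ioo (0:ℝ) 1) :=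
      (Integrable.ofReal ((hint k).1)).const_mul _
    exact h1.congr_fun (fun s hs => (key k s hs).symm) measurableSet_Ioo
  have hFcval : ∀ k, ∫ s in Ioo (0:ℝ) 1, Fc k s = ((lam k : ℝ) : ℂ) * (a k * z ^ k) := by
    intro k
    have h2 : (∫ s in Ioo (0:ℝ) 1, ((Real.log (1/s) ^ (σ-1) * s ^ (α+(k:ℝ)) : ℝ) : ℂ))
        = ((lam k : ℝ) : ℂ) := by
      rw [← (hint k).2]
      exact integral_ofReal
    rw [setIntegral_congr_fun measurableSet_Ioo (key k), MeasureTheory.integral_const_mul, h2,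
      mul_comm]
  have hFcnormval : ∀ k, ∫ s in Ioo (0:ℝ) 1, ‖Fc k s‖ ≤ (lam 0 * C) * q ^ k := by
    intro k
    have heq : ∀ s ∈ Ioo (0:ℝ) 1, ‖Fc k s‖
        = ‖a k * z ^ k‖ * (Real.log (1/s) ^ (σ-1) * s ^ (α+(k:ℝ))) := by
      intro s hs
      have hnn : 0 ≤ Real.log (1/s) ^ (σ-1) * s ^ (α+(k:ℝ)) := by
        have h3 : 0 ≤ Real.log (1/s) := Real.log_nonneg (one_le_one_div hs.1 hs.2.le)
        exact mul_nonneg (Real.rpow_nonneg h3 _) (Real.rpow_nonneg hs.1.le _)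
      rw [hFc]
      simp only []
      rw [key k s hs, norm_mul, Complex.norm_real, Real.norm_eq_abs, _root_.abs_of_nonneg hnn]
    rw [setIntegral_congr_fun measurableSet_Ioo heq, MeasureTheory.integral_const_mul,
      (hint k).2]
    calc ‖a k * z ^ k‖ * lam k ≤ (C * q ^ k) * lam 0 :=
          mul_le_mul (haq k) (hlamle k) (hlampos k).le (by positivity)
    _ = (lam 0 * C) * q ^ k := by ring
  have hsumnorm : Summable (fun k => ∫ s in Ioo (0:ℝ) 1, ‖Fc k s‖) :=
    Summable.of_nonneg_of_le (fun k => integral_nonneg fun s => norm_nonneg _)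
      hFcnormval ((summable_geometric_of_lt_one hq0 hq1).mul_left _)
  have main1 := MeasureTheory.hasSum_integral_of_summable_integral_norm hFcint hsumnorm
  have hterm : ∀ s ∈ Ioo (0:ℝ) 1, ∀ k : ℕ, ‖a k * ((s:ℂ) * z) ^ k‖ ≤ C * q ^ k := by
    intro s hs k
    have h1 : ‖(s:ℂ) * z‖ ≤ ‖z‖ := by
      rw [norm_mul, Complex.norm_real, Real.norm_eq_abs, abs_of_pos hs.1]
      exact mul_le_of_le_one_left (norm_nonneg z) hs.2.le
    calc ‖a k * ((s:ℂ) * z) ^ k‖ = ‖a k‖ * ‖(s:ℂ) * z‖ ^ k := by rw [norm_mul, norm_pow]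
    _ ≤ ‖a k‖ * ‖z‖ ^ k := by gcongr
    _ = ‖a k * z ^ k‖ := by rw [norm_mul, norm_pow]
    _ ≤ C * q ^ k := haq k
  constructor
  · have hfun : (fun k => ∫ s in Ioo (0:ℝ) 1, Fc k s)
        = fun k : ℕ => ((lam k : ℝ) : ℂ) * (a k * z ^ k) := funext hFcval
    have hval : (∫ s in Ioo (0:ℝ) 1, ∑' k, Fc k s)
        = ∫ s in Ioo (0:ℝ) 1, ((Real.log (1/s) ^ (σ-1) * s ^ α : ℝ) : ℂ) *
            (∑' k : ℕ, a k * ((s:ℂ) * z) ^ k) :=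
      setIntegral_congr_fun measurableSet_Ioo (fun s hs => tsum_mul_left)
    rw [hfun, hval] at main1
    exact main1
  · have hGb : ∀ s ∈ Ioo (0:ℝ) 1, ‖∑' k : ℕ, a k * ((s:ℂ) * z) ^ k‖ ≤ C / (1 - q) := by
      intro s hs
      have hsum : Summable (fun k : ℕ => ‖a k * ((s:ℂ) * z) ^ k‖) :=
        Summable.of_nonneg_of_le (fun k => norm_nonneg _) (hterm s hs)
          ((summable_geometric_of_lt_one hq0 hq1).mul_left _)
      calc ‖∑' k : ℕ, a k * ((s:ℂ) * z) ^ k‖ ≤ ∑' k : ℕ, ‖a k * ((s:ℂ) * z) ^ k‖ :=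
            norm_tsum_le_tsum_norm hsum
      _ ≤ ∑' k : ℕ, C * q ^ k :=
            hsum.tsum_le_tsum (hterm s hs) ((summable_geometric_of_lt_one hq0 hq1).mul_left _)
      _ = C * (1 - q)⁻¹ := by
            rw [tsum_mul_left, tsum_geometric_of_lt_one hq0 hq1]
      _ = C / (1 - q) := by rw [div_eq_mul_inv]
    have hwcont : ContinuousOn w (Ioo (0:ℝ) 1) := by
      have hinv : ContinuousOn (fun s : ℝ => 1/s) (Ioo (0:ℝ) 1) :=
        continuousOn_const.div continuousOn_id (fun s hs => ne_of_gt hs.1)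
      have hlog : ContinuousOn (fun s : ℝ => Real.log (1/s)) (Ioo (0:ℝ) 1) :=
        ContinuousOn.log hinv (fun s hs => by
          have : (1:ℝ) < 1/s := one_lt_one_div hs.1 hs.2
          linarith)
      apply ContinuousOn.mul
      · exact ContinuousOn.rpow_const hlog
          (fun s hs => Or.inl (ne_of_gt (Real.log_pos (one_lt_one_div hs.1 hs.2))))
      · exact ContinuousOn.rpow_const continuousOn_id (fun s hs => Or.inl (ne_of_gt hs.1))
    have hGcont : ContinuousOn (fun s : ℝ => ∑' k : ℕ, a k * ((s:ℂ) * z) ^ k) (Ioo (0:ℝ) 1) := by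
      refine continuousOn_tsum (fun k => Continuous.continuousOn ?_)
        ((summable_geometric_of_lt_one hq0 hq1).mul_left C) (fun k s hs => hterm s hs k)
      exact continuous_const.mul ((Complex.continuous_ofReal.mul continuous_const).pow k)
    have hmeas : AEStronglyMeasurable
        (fun s : ℝ => ((w s : ℝ):ℂ) * (∑' k : ℕ, a k * ((s:ℂ) * z) ^ k))
        (volume.restrict (Ioo (0:ℝ) 1)) :=
      ((Complex.continuous_ofReal.comp_continuousOn hwcont).mul hGcont).aestronglyMeasurable
        measurableSet_Ioo
    refine Integrable.mono' (((jks_int σ hσ α hα).1).const_mul (C/(1-q))) hmeas ?_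
    filter_upwards [ae_restrict_mem measurableSet_Ioo] with s hs
    rw [norm_mul, Complex.norm_real, Real.norm_eq_abs, _root_.abs_of_nonneg (hwnn s hs)]
    calc w s * ‖∑' k : ℕ, a k * ((s:ℂ) * z) ^ k‖ ≤ w s * (C/(1-q)) :=
          mul_le_mul_of_nonneg_left (hGb s hs) (hwnn s hs)
    _ = C/(1-q) * w s := mul_comm _ _

/-- Closure of `T_n^α(β)` under the generalized Jung–Kim–Srivastava transform
`Φ z = (2^σ/Γ(σ)) ∫₀¹ (log(1/s))^(σ-1) s^α F(s z) ds`. -/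
theorem stmt_18 (α : ℝ) (hα0 : 0 < α) (hα1 : α ≤ 1) (σ : ℝ) (hσ : 0 < σ) (n : ℕ)
    (β : ℝ) (hβ0 : 0 ≤ β) (hβ1 : β < 1)
    (F : ℂ → ℂ) (hFd : DifferentiableOn ℂ F (ball (0 : ℂ) 1)) (hF0 : F 0 = 1)
    (hFT : TcondF α n β F)
    (Φ : ℂ → ℂ)
    (hΦ : ∀ z : ℂ, Φ z = (((2 : ℝ) ^ σ / Real.Gamma σ : ℝ) : ℂ) *
      ∫ s in (0 : ℝ)..1, ((Real.log (1 / s) ^ (σ - 1) * s ^ α : ℝ) : ℂ) * F ((s : ℂ) * z)) :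
    DifferentiableOn ℂ Φ (ball (0 : ℂ) 1) ∧ TcondF α n β Φ := by
  have hΓ : 0 < Real.Gamma σ := Real.Gamma_pos_of_pos hσ
  set K : ℝ := (2:ℝ) ^ σ / Real.Gamma σ with hKdef
  have hK0 : 0 < K := by positivity
  set lam : ℕ → ℝ := fun k => Real.Gamma σ * (1/(α+(k:ℝ)+1)) ^ σ with hlamdef
  have hlampos : ∀ k, 0 < lam k := by
    intro k
    have h1 : (0:ℝ) < α+(k:ℝ)+1 := by positivity
    have h2 : (0:ℝ) < (1/(α+(k:ℝ)+1)) ^ σ := Real.rpow_pos_of_pos (by positivity) σ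
    positivity
  have hlamle : ∀ k, lam k ≤ lam 0 := by
    intro k
    refine mul_le_mul_of_nonneg_left (Real.rpow_le_rpow (by positivity) ?_ hσ.le) hΓ.le
    rw [Nat.cast_zero]
    gcongr
    all_goals first | positivity | linarith [Nat.cast_nonneg (α := ℝ) k]
  have hμ1 : ∀ k : ℕ, 1 ≤ ((α + (k:ℝ))/α) ^ n := by
    intro k
    apply one_le_pow₀
    rw [le_div_iff₀ hα0]
    simp [Nat.cast_nonneg]
  -- Taylor expansion of F
  have hFt : ∀ w ∈ ball (0:ℂ) 1, F w = ∑' k : ℕ, taylorCoeff F k * w ^ k := by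
    intro w hw
    rw [← Complex.taylorSeries_eq_on_ball' hw hFd]
    refine tsum_congr fun k => ?_
    rw [taylorCoeff, sub_zero, div_eq_inv_mul]
  -- coefficient bounds
  have hbd : ∀ r : ℝ, 0 ≤ r → r < 1 → ∃ C : ℝ, 0 ≤ C ∧
      ∀ k : ℕ, (((α + (k:ℝ))/α) ^ n * ‖taylorCoeff F k‖) * r ^ k ≤ C := by
    intro r hr0 hr1
    set t : ℝ := max r 2⁻¹ with htdef
    have ht1 : t < 1 := max_lt hr1 (by norm_num)
    have ht0 : (0:ℝ) < t := lt_of_lt_of_le (by norm_num) (le_max_right _ _)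
    have hmem : ((t:ℝ) : ℂ) ∈ ball (0:ℂ) 1 := by
      rw [mem_ball_zero_iff, Complex.norm_real, Real.norm_eq_abs, abs_of_pos ht0]
      exact ht1
    obtain ⟨hs, -⟩ := hFT _ hmem
    obtain ⟨C, hC⟩ := (hs.tendsto_atTop_zero.norm).bddAbove_range
    have hnorm : ∀ k : ℕ, ‖((((α + (k:ℝ))/α) ^ n : ℝ) : ℂ) * taylorCoeff F k * ((t:ℝ):ℂ) ^ k‖
        = (((α + (k:ℝ))/α) ^ n * ‖taylorCoeff F k‖) * t ^ k := by
      intro k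
      rw [norm_mul, norm_mul, norm_pow, Complex.norm_real, Complex.norm_real,
        Real.norm_eq_abs, Real.norm_eq_abs, _root_.abs_of_nonneg (by positivity),
        _root_.abs_of_pos ht0]
    refine ⟨C, ?_, ?_⟩
    · refine le_trans (norm_nonneg _) (hC (Set.mem_range_self 0))
    · intro k
      have h1 := hC (Set.mem_range_self k)
      rw [hnorm k] at h1
      refine le_trans ?_ h1
      have : r ^ k ≤ t ^ k := pow_le_pow_left₀ hr0 (le_max_left _ _) k
      have hnn : 0 ≤ ((α + (k:ℝ))/α) ^ n * ‖taylorCoeff F k‖ := by positivity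
      exact mul_le_mul_of_nonneg_left this hnn
  -- the power-series representation of Φ
  have hΦsum : ∀ z ∈ ball (0:ℂ) 1,
      HasSum (fun k : ℕ => (((K * lam k : ℝ)) : ℂ) * taylorCoeff F k * z ^ k) (Φ z) := by
    intro z hz
    rw [mem_ball_zero_iff] at hz
    set r : ℝ := (‖z‖ + 1)/2 with hrdef
    have hzr : ‖z‖ < r := by rw [hrdef]; linarith
    have hr1 : r < 1 := by rw [hrdef]; linarith
    have hr0 : 0 ≤ r := le_trans (norm_nonneg z) hzr.le
    obtain ⟨C, hC0, hC⟩ := hbd r hr0 hr1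
    have hCf : ∀ k : ℕ, ‖taylorCoeff F k‖ * r ^ k ≤ C := by
      intro k
      refine le_trans ?_ (hC k)
      have : ‖taylorCoeff F k‖ ≤ ((α + (k:ℝ))/α) ^ n * ‖taylorCoeff F k‖ :=
        le_mul_of_one_le_left (norm_nonneg _) (hμ1 k)
      exact mul_le_mul_of_nonneg_right this (by positivity)
    have hswap := (jks_swap σ α hσ hα0 (fun k => taylorCoeff F k) r C hr1 hCf z hzr).1
    have hΦz : Φ z = ((K:ℝ):ℂ) * ∫ s in Ioo (0:ℝ) 1,
        ((Real.log (1/s) ^ (σ-1) * s ^ α : ℝ) : ℂ) *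
        (∑' k : ℕ, taylorCoeff F k * ((s:ℂ) * z) ^ k) := by
      rw [hΦ z, intervalIntegral.integral_of_le zero_le_one,
        MeasureTheory.integral_Ioc_eq_integral_Ioo]
      congr 1
      refine setIntegral_congr_fun measurableSet_Ioo (fun s hs => ?_)
      congr 1
      refine hFt ((s:ℂ)*z) ?_
      rw [mem_ball_zero_iff, norm_mul, Complex.norm_real, Real.norm_eq_abs,
        abs_of_pos hs.1]
      calc s * ‖z‖ ≤ 1 * ‖z‖ := by
            exact mul_le_mul_of_nonneg_right hs.2.le (norm_nonneg z)
      _ < 1 := by rw [one_mul]; exact hz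
    rw [hΦz]
    have hms := hswap.mul_left ((K:ℝ):ℂ)
    refine HasSum.congr_fun hms fun k => ?_
    simp only [hlamdef]
    push_cast
    ring
  set c : ℕ → ℂ := fun k => (((K * lam k : ℝ)) : ℂ) * taylorCoeff F k with hcdef
  have hnormc : ∀ k, ‖c k‖ = (K * lam k) * ‖taylorCoeff F k‖ := by
    intro k
    rw [hcdef]
    simp only []
    rw [norm_mul, Complex.norm_real, Real.norm_eq_abs,
      _root_.abs_of_nonneg (mul_nonneg hK0.le (hlampos k).le)]
  set p : FormalMultilinearSeries ℂ ℂ ℂ := FormalMultilinearSeries.ofScalars ℂ c with hpdef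
  have hball : Metric.eball (0:ℂ) 1 = ball (0:ℂ) 1 := by
    rw [← ENNReal.coe_one, Metric.emetric_ball_nnreal, NNReal.coe_one]
  have hpb : HasFPowerSeriesOnBall Φ p 0 1 := by
    refine ⟨?_, zero_lt_one, ?_⟩
    · refine ENNReal.le_of_forall_nnreal_lt (fun t ht => ?_)
      have ht1 : (t:ℝ) < 1 := by exact_mod_cast ht
      obtain ⟨C, hC0, hC⟩ := hbd t t.coe_nonneg ht1
      refine FormalMultilinearSeries.le_radius_of_bound _ ((K * lam 0) * C) (fun k => ?_)
      rw [hpdef, FormalMultilinearSeries.ofScalars_norm, hnormc k]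
      calc K * lam k * ‖taylorCoeff F k‖ * (t:ℝ) ^ k
          = (K * lam k) * (‖taylorCoeff F k‖ * (t:ℝ) ^ k) := by ring
      _ ≤ (K * lam 0) * ((((α + (k:ℝ))/α) ^ n * ‖taylorCoeff F k‖) * (t:ℝ) ^ k) := by
          refine mul_le_mul (mul_le_mul_of_nonneg_left (hlamle k) hK0.le) ?_ (by positivity)
            (mul_nonneg hK0.le (hlampos 0).le)
          refine mul_le_mul_of_nonneg_right ?_ (by positivity)
          exact le_mul_of_one_le_left (norm_nonneg _) (hμ1 k)
      _ ≤ (K * lam 0) * C :=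
          mul_le_mul_of_nonneg_left (hC k) (mul_nonneg hK0.le (hlampos 0).le)
    · intro y hy
      rw [hball] at hy
      rw [zero_add]
      refine HasSum.congr_fun (hΦsum y hy) (fun k => ?_)
      rw [hpdef, FormalMultilinearSeries.ofScalars_apply_eq, smul_eq_mul, hcdef]
  have hcoeff : ∀ k : ℕ, taylorCoeff Φ k = c k := by
    intro k
    have h1 := hpb.factorial_smul (y := (1:ℂ)) k
    rw [hpdef, FormalMultilinearSeries.ofScalars_apply_eq, one_pow, smul_eq_mul, mul_one] at h1
    rw [taylorCoeff, iteratedDeriv_eq_iteratedFDeriv, ← h1, nsmul_eq_mul]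
    exact mul_div_cancel_left₀ _ (Nat.cast_ne_zero.mpr k.factorial_ne_zero)
  constructor
  · have hd := hpb.differentiableOn
    rwa [hball] at hd
  · intro z hz
    have hcoeffs : (fun k : ℕ => ((((α + (k:ℝ)) / α) ^ n : ℝ) : ℂ) * taylorCoeff Φ k * z ^ k)
        = fun k : ℕ => ((((α + (k:ℝ)) / α) ^ n : ℝ) : ℂ) * c k * z ^ k := by
      funext k; rw [hcoeff k]
    rw [mem_ball_zero_iff] at hz
    set r : ℝ := (‖z‖ + 1)/2 with hrdef
    have hzr : ‖z‖ < r := by rw [hrdef]; linarith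
    have hr1 : r < 1 := by rw [hrdef]; linarith
    obtain ⟨C, hC0, hC⟩ := hbd r (le_trans (norm_nonneg z) hzr.le) hr1
    set a : ℕ → ℂ := fun k => ((((α + (k:ℝ)) / α) ^ n : ℝ) : ℂ) * taylorCoeff F k with hadef
    have hCa : ∀ k : ℕ, ‖a k‖ * r ^ k ≤ C := by
      intro k
      rw [hadef]
      simp only []
      rw [norm_mul, Complex.norm_real, Real.norm_eq_abs,
        _root_.abs_of_nonneg (le_trans zero_le_one (hμ1 k))]
      exact hC k
    obtain ⟨hsw, hint2⟩ := jks_swap σ α hσ hα0 a r C hr1 hCa z hzr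
    have hms := hsw.mul_left ((K:ℝ):ℂ)
    have hmain : HasSum (fun k : ℕ => ((((α + (k:ℝ)) / α) ^ n : ℝ) : ℂ) * c k * z ^ k)
        (((K:ℝ):ℂ) * ∫ s in Ioo (0:ℝ) 1, ((Real.log (1/s) ^ (σ-1) * s ^ α : ℝ) : ℂ) *
          (∑' k : ℕ, a k * ((s:ℂ) * z) ^ k)) := by
      refine HasSum.congr_fun hms (fun k => ?_)
      rw [hcdef, hadef, hlamdef]
      push_cast
      ring
    rw [hcoeffs]
    refine ⟨hmain.summable, ?_⟩
    rw [hmain.tsum_eq, Complex.re_ofReal_mul]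
    have hu : ∀ s ∈ Ioo (0:ℝ) 1, β < (∑' k : ℕ, a k * ((s:ℂ) * z) ^ k).re := by
      intro s hs
      have hmem : (s:ℂ) * z ∈ ball (0:ℂ) 1 := by
        rw [mem_ball_zero_iff, norm_mul, Complex.norm_real, Real.norm_eq_abs,
          _root_.abs_of_pos hs.1]
        calc s * ‖z‖ ≤ 1 * ‖z‖ := mul_le_mul_of_nonneg_right hs.2.le (norm_nonneg z)
        _ < 1 := by rw [one_mul]; exact hz
      obtain ⟨-, hre⟩ := hFT ((s:ℂ) * z) hmem
      have heq2 : (∑' k : ℕ, ((((α + (k:ℝ)) / α) ^ n : ℝ) : ℂ) * taylorCoeff F k *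
          ((s:ℂ) * z) ^ k) = ∑' k : ℕ, a k * ((s:ℂ) * z) ^ k := by
        refine tsum_congr fun k => ?_
        rw [hadef]
      rwa [heq2] at hre
    have hIre : (∫ s in Ioo (0:ℝ) 1, ((Real.log (1/s) ^ (σ-1) * s ^ α : ℝ) : ℂ) *
        (∑' k : ℕ, a k * ((s:ℂ) * z) ^ k)).re
        = ∫ s in Ioo (0:ℝ) 1, (Real.log (1/s) ^ (σ-1) * s ^ α) *
            (∑' k : ℕ, a k * ((s:ℂ) * z) ^ k).re := by
      have h3 := integral_re hint2
      simp only [RCLike.re_to_complex] at h3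
      rw [← h3]
      refine setIntegral_congr_fun measurableSet_Ioo (fun s hs => ?_)
      exact Complex.re_ofReal_mul _ _
    rw [hIre]
    -- integrability facts
    have hwint := (jks_int σ hσ α hα0).1
    have hwval := (jks_int σ hσ α hα0).2
    have hWu : IntegrableOn (fun s : ℝ => (Real.log (1/s) ^ (σ-1) * s ^ α) *
        (∑' k : ℕ, a k * ((s:ℂ) * z) ^ k).re) (Ioo (0:ℝ) 1) := by
      have h4 := hint2.re
      simp only [RCLike.re_to_complex] at h4
      refine IntegrableOn.congr_fun h4 (fun s hs => ?_) measurableSet_Ioo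
      exact Complex.re_ofReal_mul _ _
    have hsub : IntegrableOn (fun s : ℝ => (Real.log (1/s) ^ (σ-1) * s ^ α) *
        ((∑' k : ℕ, a k * ((s:ℂ) * z) ^ k).re - β)) (Ioo (0:ℝ) 1) := by
      have h5 : (fun s : ℝ => (Real.log (1/s) ^ (σ-1) * s ^ α) *
          ((∑' k : ℕ, a k * ((s:ℂ) * z) ^ k).re - β))
          = fun s : ℝ => (Real.log (1/s) ^ (σ-1) * s ^ α) *
              (∑' k : ℕ, a k * ((s:ℂ) * z) ^ k).re
            - β * (Real.log (1/s) ^ (σ-1) * s ^ α) := by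
        funext s; ring
      rw [h5]
      exact hWu.sub (hwint.const_mul β)
    have hwpos : ∀ s ∈ Ioo (0:ℝ) 1, 0 < Real.log (1/s) ^ (σ-1) * s ^ α := by
      intro s hs
      have h6 : 0 < Real.log (1/s) := Real.log_pos (one_lt_one_div hs.1 hs.2)
      exact mul_pos (Real.rpow_pos_of_pos h6 _) (Real.rpow_pos_of_pos hs.1 _)
    have hpos : 0 < ∫ s in Ioo (0:ℝ) 1, (Real.log (1/s) ^ (σ-1) * s ^ α) *
        ((∑' k : ℕ, a k * ((s:ℂ) * z) ^ k).re - β) := by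
      rw [setIntegral_pos_iff_support_of_nonneg_ae ?_ hsub]
      · refine lt_of_lt_of_le ?_ (measure_mono (subset_inter (fun s hs => ?_) Subset.rfl))
        · rw [Real.volume_Ioo]
          norm_num
        · exact ne_of_gt (mul_pos (hwpos s hs) (by linarith [hu s hs]))
      · filter_upwards [ae_restrict_mem measurableSet_Ioo] with s hs
        exact mul_nonneg (hwpos s hs).le (by linarith [hu s hs])
    have hsplit : ∫ s in Ioo (0:ℝ) 1, (Real.log (1/s) ^ (σ-1) * s ^ α) *
        ((∑' k : ℕ, a k * ((s:ℂ) * z) ^ k).re - β)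
        = (∫ s in Ioo (0:ℝ) 1, (Real.log (1/s) ^ (σ-1) * s ^ α) *
            (∑' k : ℕ, a k * ((s:ℂ) * z) ^ k).re)
          - β * ∫ s in Ioo (0:ℝ) 1, (Real.log (1/s) ^ (σ-1) * s ^ α) := by
      calc ∫ s in Ioo (0:ℝ) 1, (Real.log (1/s) ^ (σ-1) * s ^ α) *
            ((∑' k : ℕ, a k * ((s:ℂ) * z) ^ k).re - β)
          = ∫ s in Ioo (0:ℝ) 1, ((Real.log (1/s) ^ (σ-1) * s ^ α) *
              (∑' k : ℕ, a k * ((s:ℂ) * z) ^ k).re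
            - β * (Real.log (1/s) ^ (σ-1) * s ^ α)) :=
            setIntegral_congr_fun measurableSet_Ioo (fun s hs => by ring)
      _ = _ := by
            rw [integral_sub hWu (hwint.const_mul β), MeasureTheory.integral_const_mul]
    have hKW : 1 ≤ K * ∫ s in Ioo (0:ℝ) 1, (Real.log (1/s) ^ (σ-1) * s ^ α) := by
      rw [hwval, hKdef]
      have h7 : (2:ℝ) ^ σ / Real.Gamma σ * (Real.Gamma σ * (1/(α+1)) ^ σ)
          = (2:ℝ) ^ σ * (1/(α+1)) ^ σ := by
        field_simp
      rw [h7, ← Real.mul_rpow (by norm_num) (by positivity)]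
      calc (1:ℝ) = 1 ^ σ := (Real.one_rpow σ).symm
      _ ≤ (2 * (1/(α+1))) ^ σ := by
          refine Real.rpow_le_rpow zero_le_one ?_ hσ.le
          rw [mul_one_div, le_div_iff₀ (by linarith)]
          linarith
    have hfin := hsplit ▸ hpos
    nlinarith [mul_lt_mul_of_pos_left (by linarith [hfin] :
        β * (∫ s in Ioo (0:ℝ) 1, (Real.log (1/s) ^ (σ-1) * s ^ α))
          < ∫ s in Ioo (0:ℝ) 1, (Real.log (1/s) ^ (σ-1) * s ^ α) *
              (∑' k : ℕ, a k * ((s:ℂ) * z) ^ k).re) hK0,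
      mul_le_mul_of_nonneg_left hKW hβ0]
end

section
/- Let α be real with 0 < α ≤ 1, let σ, γ > 0 be real, let n ≥ 0 be an integer, and let 0 ≤ β < 1. Suppose F is analytic on E with F(0) = 1 and F satisfies condition T_n^α(β). Define Φ : E → ℂ by Φ(z) = (Γ(σ+γ+1)/(Γ(σ+1)Γ(γ+1))) · σ ∫₀¹ (1 − s)^{σ−1} s^{γ+α−1} F(s z) ds (the integral over the real variable s ∈ (0,1)). Then Φ is analytic on E and, with c_k denoting its Taylor coefficients at 0, the series Σ_{k≥0} ((α+k)/α)^n c_k z^k converges on E and its sum has real part greater than β throughout E (i.e., Φ satisfies condition T_n^α(β)). -/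
open Complex Metric MeasureTheory Set Filter
open scoped NNReal ENNReal Topology

lemma mem_eball_iff (z : ℂ) (r : ℝ≥0) : z ∈ Metric.eball (0:ℂ) (r : ℝ≥0∞) ↔ ‖z‖ < r := by
  rw [EMetric.mem_ball, edist_zero_right]
  exact_mod_cast Iff.rfl

lemma mem_eball_one_iff' (z : ℂ) : z ∈ Metric.eball (0:ℂ) 1 ↔ ‖z‖ < 1 := by
  simpa using mem_eball_iff z 1

lemma summable_norm_of_summable {a : ℕ → ℂ} {t r : ℝ} (ht0 : 0 ≤ t) (htr : t < r)
    (hs : Summable fun k => a k * (r : ℂ) ^ k) : Summable fun k => ‖a k‖ * t ^ k := by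
  have hr0 : 0 < r := lt_of_le_of_lt ht0 htr
  obtain ⟨C, hC⟩ := (hs.tendsto_atTop_zero.norm.bddAbove_range)
  rw [mem_upperBounds] at hC
  have hC' : ∀ k, ‖a k‖ * r ^ k ≤ C := by
    intro k
    have := hC _ (Set.mem_range_self (f := fun k => ‖a k * (r:ℂ) ^ k‖) k)
    simpa [norm_mul, norm_pow, abs_of_pos hr0] using this
  have hgeo : Summable fun k : ℕ => C * (t / r) ^ k :=
    (summable_geometric_of_lt_one (r := t / r) (by positivity)
      ((div_lt_one hr0).2 htr)).mul_left C
  refine Summable.of_nonneg_of_le (fun k => by positivity) (fun k => ?_) hgeo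
  have h1 : ‖a k‖ * t ^ k = (‖a k‖ * r ^ k) * (t / r) ^ k := by
    rw [div_pow]
    field_simp
  rw [h1]
  exact mul_le_mul_of_nonneg_right (hC' k) (by positivity)

lemma hasFPS_of_hasSum {g : ℂ → ℂ} {a : ℕ → ℂ}
    (h : ∀ z ∈ ball (0:ℂ) 1, HasSum (fun k => a k * z ^ k) (g z)) :
    HasFPowerSeriesOnBall g (FormalMultilinearSeries.ofScalars ℂ a) 0 1 := by
  have heq : ∀ n, ‖(FormalMultilinearSeries.ofScalars ℂ a) n‖ = ‖a n‖ := fun n =>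
    FormalMultilinearSeries.ofScalars_norm ℂ a n
  have hterm : ∀ (y : ℂ) n, ((FormalMultilinearSeries.ofScalars ℂ a) n fun _ => y) = a n * y ^ n :=
    fun y n => by rw [FormalMultilinearSeries.ofScalars_apply_eq, smul_eq_mul]
  constructor
  · refine ENNReal.le_of_forall_nnreal_lt fun r hr => ?_
    rw [ENNReal.coe_lt_one_iff, ← NNReal.coe_lt_one] at hr
    set r' : ℝ := ((r : ℝ) + 1) / 2 with hr'def
    have h0 : (0:ℝ) ≤ r := r.coe_nonneg
    have hrr' : (r : ℝ) < r' := by rw [hr'def]; linarith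
    have hr'1 : r' < 1 := by rw [hr'def]; linarith
    have hr'0 : (0:ℝ) ≤ r' := by linarith
    have hsum := (h (r' : ℂ) (by
      rw [mem_ball_zero_iff, Complex.norm_real, Real.norm_eq_abs, _root_.abs_of_nonneg hr'0]
      exact hr'1)).summable
    have hs2 := summable_norm_of_summable h0 hrr' hsum
    refine FormalMultilinearSeries.le_radius_of_summable _ ?_
    simp only [heq]
    exact hs2
  · exact one_pos
  · intro y hy
    rw [zero_add]
    rw [mem_eball_one_iff'] at hy
    have := h y (mem_ball_zero_iff.2 hy)
    simp only [hterm]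
    exact this

lemma taylorCoeff_eq_coeff' {f : ℂ → ℂ} {p : FormalMultilinearSeries ℂ ℂ ℂ} {r : ℝ≥0∞}
    (h : HasFPowerSeriesOnBall f p 0 r) (k : ℕ) :
    iteratedDeriv k f 0 / (k.factorial : ℂ) = p.coeff k := by
  have h2 := h.factorial_smul (1 : ℂ) k
  rw [iteratedDeriv_eq_iteratedFDeriv, ← h2]
  have h3 : (p k fun _ => (1:ℂ)) = p.coeff k := rfl
  rw [h3, nsmul_eq_mul, mul_div_cancel_left₀]
  exact_mod_cast k.factorial_ne_zero

lemma ofScalars_coeff (a : ℕ → ℂ) (k : ℕ) :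
    (FormalMultilinearSeries.ofScalars ℂ a).coeff k = a k := by
  show (FormalMultilinearSeries.ofScalars ℂ a) k (fun _ => 1) = a k
  rw [FormalMultilinearSeries.ofScalars_apply_eq]
  simp

lemma hasSum_taylor_of_diff {f : ℂ → ℂ} (hf : DifferentiableOn ℂ f (ball (0:ℂ) 1)) :
    ∀ z ∈ ball (0:ℂ) 1,
      HasSum (fun k => (iteratedDeriv k f 0 / (k.factorial : ℂ)) * z ^ k) (f z) := by
  intro z hz
  rw [mem_ball_zero_iff] at hz
  have h0z : (0:ℝ) ≤ ‖z‖ := norm_nonneg z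
  set r' : ℝ≥0 := ⟨(‖z‖ + 1) / 2, by positivity⟩ with hr'
  have hzr : ‖z‖ < (r' : ℝ) := by show ‖z‖ < (‖z‖+1)/2; linarith
  have hr1 : (r' : ℝ) < 1 := by show (‖z‖+1)/2 < 1; linarith
  have hr0 : 0 < r' := by rw [← NNReal.coe_pos]; show (0:ℝ) < (‖z‖+1)/2; positivity
  have hd : DifferentiableOn ℂ f (closedBall 0 r') := by
    refine hf.mono fun x hx => ?_
    rw [mem_closedBall_zero_iff] at hx
    rw [mem_ball_zero_iff]
    exact lt_of_le_of_lt hx hr1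
  have hps := hd.hasFPowerSeriesOnBall hr0
  have hmem : z ∈ Metric.eball (0:ℂ) (r' : ℝ≥0∞) := (mem_eball_iff z r').2 hzr
  have hS := hps.hasSum hmem
  rw [zero_add] at hS
  convert hS using 2 with k
  · rfl
  rw [taylorCoeff_eq_coeff' hps, FormalMultilinearSeries.apply_eq_pow_smul_coeff,
    smul_eq_mul, mul_comm]

lemma hasSum_integral_weighted {w : ℝ → ℝ} (hw_int : IntegrableOn w (Ioc (0:ℝ) 1))
    (hw_nonneg : ∀ s ∈ Ioc (0:ℝ) 1, 0 ≤ w s)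
    {d : ℕ → ℂ} {z : ℂ} {g : ℝ → ℂ}
    (hsum : Summable fun k => ‖d k‖ * ‖z‖ ^ k)
    (hg : ∀ s ∈ Ioc (0:ℝ) 1, HasSum (fun k => d k * ((s:ℂ) * z) ^ k) (g s)) :
    HasSum (fun k => ((∫ s in Ioc (0:ℝ) 1, w s * s ^ k : ℝ) : ℂ) * (d k * z ^ k))
      (∫ s in Ioc (0:ℝ) 1, ((w s : ℝ) : ℂ) * g s) := by
  have hms : MeasurableSet (Ioc (0:ℝ) 1) := measurableSet_Ioc
  have hwk : ∀ k, IntegrableOn (fun s => w s * s ^ k) (Ioc (0:ℝ) 1) := by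
    intro k
    refine Integrable.mono' hw_int
      (hw_int.aestronglyMeasurable.mul ((continuous_pow k).aestronglyMeasurable)) ?_
    filter_upwards [ae_restrict_mem hms] with s hs
    rw [Real.norm_eq_abs, abs_mul, _root_.abs_of_nonneg (hw_nonneg s hs),
      _root_.abs_of_nonneg (pow_nonneg hs.1.le k)]
    exact mul_le_of_le_one_right (hw_nonneg s hs) (pow_le_one₀ hs.1.le hs.2)
  have hfk_int : ∀ k : ℕ,
      IntegrableOn (fun s => ((w s * s ^ k : ℝ) : ℂ) * (d k * z ^ k)) (Ioc (0:ℝ) 1) :=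
    fun k => ((hwk k).ofReal.mul_const _)
  have hble : ∀ k, (∫ s in Ioc (0:ℝ) 1, w s * s ^ k) ≤ ∫ s in Ioc (0:ℝ) 1, w s := by
    intro k
    refine setIntegral_mono_on (hwk k) hw_int hms fun s hs => ?_
    exact mul_le_of_le_one_right (hw_nonneg s hs) (pow_le_one₀ hs.1.le hs.2)
  have hnorm : ∀ k, (∫ s in Ioc (0:ℝ) 1, ‖((w s * s ^ k : ℝ) : ℂ) * (d k * z ^ k)‖)
      = (∫ s in Ioc (0:ℝ) 1, w s * s ^ k) * ‖d k * z ^ k‖ := by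
    intro k
    rw [← integral_mul_const]
    refine setIntegral_congr_fun hms fun s hs => ?_
    rw [norm_mul, Complex.norm_real, Real.norm_eq_abs,
      _root_.abs_of_nonneg (mul_nonneg (hw_nonneg s hs) (pow_nonneg hs.1.le k))]
  have hsum2 : Summable fun k =>
      ∫ s in Ioc (0:ℝ) 1, ‖((w s * s ^ k : ℝ) : ℂ) * (d k * z ^ k)‖ := by
    refine Summable.of_nonneg_of_le (fun k => integral_nonneg fun s => norm_nonneg _)
      (fun k => ?_) (hsum.mul_left (∫ s in Ioc (0:ℝ) 1, w s))
    rw [hnorm k, norm_mul, norm_pow]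
    exact mul_le_mul_of_nonneg_right (hble k) (by positivity)
  have key := hasSum_integral_of_summable_integral_norm (fun k => hfk_int k) hsum2
  have hterm : ∀ k, (∫ s in Ioc (0:ℝ) 1, ((w s * s ^ k : ℝ):ℂ) * (d k * z ^ k))
      = ((∫ s in Ioc (0:ℝ) 1, w s * s ^ k : ℝ) : ℂ) * (d k * z ^ k) := by
    intro k
    have hse : (fun s => ((w s * s ^ k : ℝ):ℂ) * (d k * z ^ k))
        = fun s => (w s * s ^ k) • (d k * z ^ k) :=
      funext fun s => Complex.real_smul.symm
    rw [hse, integral_smul_const, Complex.real_smul]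
  have hsum_eq : (∫ s in Ioc (0:ℝ) 1, ∑' k, ((w s * s ^ k : ℝ):ℂ) * (d k * z ^ k))
      = ∫ s in Ioc (0:ℝ) 1, ((w s : ℝ):ℂ) * g s := by
    refine setIntegral_congr_fun hms fun s hs => ?_
    have h1 : HasSum (fun k => ((w s * s ^ k : ℝ):ℂ) * (d k * z ^ k))
        (((w s :ℝ):ℂ) * g s) := by
      have h2 := (hg s hs).mul_left ((w s : ℝ):ℂ)
      convert h2 using 2 with k
      · rfl
      push_cast
      ring
    exact h1.tsum_eq
  simp only [hterm] at key
  rw [hsum_eq] at key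
  exact key

lemma integral_ofReal' {f : ℝ → ℝ} {μ : MeasureTheory.Measure ℝ} :
    ∫ s, ((f s : ℝ) : ℂ) ∂μ = ((∫ s, f s ∂μ : ℝ) : ℂ) := by
  have h : (fun s => ((f s : ℝ) : ℂ)) = fun s => (f s) • (1:ℂ) :=
    funext fun s => by rw [Complex.real_smul, mul_one]
  rw [h, integral_smul_const, Complex.real_smul, mul_one]

lemma cast_eq_on {p q : ℝ} : ∀ s ∈ Icc (0:ℝ) 1,
    ((s:ℂ)) ^ ((p:ℂ)-1) * ((1:ℂ)-(s:ℂ)) ^ ((q:ℂ)-1)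
      = (((1 - s) ^ (q - 1) * s ^ (p - 1) : ℝ) : ℂ) := by
  intro s hs
  rw [show ((p:ℂ)-1) = ((p-1 : ℝ):ℂ) by push_cast; ring,
      show ((q:ℂ)-1) = ((q-1 : ℝ):ℂ) by push_cast; ring,
      show ((1:ℂ) - (s:ℂ)) = ((1 - s : ℝ):ℂ) by push_cast; ring,
      ← Complex.ofReal_cpow hs.1, ← Complex.ofReal_cpow (by linarith [hs.2] : (0:ℝ) ≤ 1 - s)]
  push_cast
  ring

lemma w_integrable {p q : ℝ} (hp : 0 < p) (hq : 0 < q) :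
    IntegrableOn (fun s : ℝ => (1 - s) ^ (q - 1) * s ^ (p - 1)) (Ioc (0:ℝ) 1) := by
  have hc := Complex.betaIntegral_convergent (u := (p:ℂ)) (v := (q:ℂ)) (by simpa) (by simpa)
  rw [intervalIntegrable_iff_integrableOn_Ioc_of_le zero_le_one] at hc
  have h2 : IntegrableOn (fun s : ℝ => (((1-s)^(q-1) * s^(p-1) : ℝ) : ℂ)) (Ioc (0:ℝ) 1) :=
    hc.congr_fun (fun s hs => cast_eq_on s (Ioc_subset_Icc_self hs)) measurableSet_Ioc
  have h3 := h2.re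
  refine h3.congr (Filter.EventuallyEq.of_eq (funext fun s => ?_))
  simp

lemma beta_value {p q : ℝ} (hp : 0 < p) (hq : 0 < q) :
    ∫ s in Ioc (0:ℝ) 1, (1 - s) ^ (q - 1) * s ^ (p - 1)
      = Real.Gamma p * Real.Gamma q / Real.Gamma (p + q) := by
  have hΓ := Complex.Gamma_mul_Gamma_eq_betaIntegral (s := (p:ℂ)) (t := (q:ℂ))
    (by simpa) (by simpa)
  have hbeta : Complex.betaIntegral p q
      = ((∫ s in Ioc (0:ℝ) 1, (1-s)^(q-1) * s^(p-1) : ℝ) : ℂ) := by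
    rw [Complex.betaIntegral, intervalIntegral.integral_of_le zero_le_one,
      setIntegral_congr_fun measurableSet_Ioc
        (fun s hs => cast_eq_on s (Ioc_subset_Icc_self hs)), integral_ofReal']
  rw [hbeta, Complex.Gamma_ofReal, Complex.Gamma_ofReal, show ((p:ℂ) + q) = ((p+q : ℝ):ℂ) by
    push_cast; ring, Complex.Gamma_ofReal] at hΓ
  have hreal : Real.Gamma p * Real.Gamma q
      = Real.Gamma (p+q) * ∫ s in Ioc (0:ℝ) 1, (1-s)^(q-1) * s^(p-1) := by exact_mod_cast hΓ
  have hne : Real.Gamma (p+q) ≠ 0 := (Real.Gamma_pos_of_pos (by linarith)).ne'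
  field_simp [hne] at hreal ⊢
  linarith [hreal]

lemma gamma_ineq {α σ γ : ℝ} (hα0 : 0 < α) (hα1 : α ≤ 1) (hσ : 0 < σ) (hγ : 0 < γ) :
    Real.Gamma (γ+1) * Real.Gamma (σ+γ+α) ≤ Real.Gamma (σ+γ+1) * Real.Gamma (γ+α) := by
  have hd : 0 < σ + 1 - α := by linarith
  set t := σ / (σ+1-α) with htdef
  set u := (1-α) / (σ+1-α) with hudef
  have ht : 0 ≤ t := by positivity
  have hu : 0 ≤ u := div_nonneg (by linarith) (by linarith)
  have htu : t + u = 1 := by rw [htdef, hudef]; field_simp; ring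
  have hx : (γ+α) ∈ Ioi (0:ℝ) := by rw [mem_Ioi]; linarith
  have hy : (σ+γ+1) ∈ Ioi (0:ℝ) := by rw [mem_Ioi]; linarith
  have h1 := Real.convexOn_log_Gamma.2 hx hy ht hu htu
  have h2 := Real.convexOn_log_Gamma.2 hx hy hu ht (by linarith)
  simp only [Function.comp_apply, smul_eq_mul] at h1 h2
  have e1 : t * (γ+α) + u * (σ+γ+1) = γ + 1 := by
    rw [htdef, hudef]; field_simp; ring
  have e2 : u * (γ+α) + t * (σ+γ+1) = σ + γ + α := by
    rw [htdef, hudef]; field_simp; ring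
  rw [e1] at h1
  rw [e2] at h2
  set A := Real.log (Real.Gamma (γ+α))
  set B := Real.log (Real.Gamma (σ+γ+1))
  have hcomb : t * A + u * B + (u * A + t * B) = A + B := by
    have : t * A + u * B + (u * A + t * B) = (t + u) * A + (t + u) * B := by ring
    rw [this, htu, one_mul, one_mul]
  have hlog : Real.log (Real.Gamma (γ+1)) + Real.log (Real.Gamma (σ+γ+α)) ≤ A + B := by
    linarith
  have hexp := Real.exp_le_exp.2 hlog
  rw [Real.exp_add, Real.exp_add, Real.exp_log (Real.Gamma_pos_of_pos (by linarith)),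
    Real.exp_log (Real.Gamma_pos_of_pos (by linarith))] at hexp
  rw [Real.exp_log (Real.Gamma_pos_of_pos (by linarith)),
    Real.exp_log (Real.Gamma_pos_of_pos (by linarith))] at hexp
  linarith [hexp]

/-- Closure of `T_n^α(β)` under the generalized Jung–Kim–Srivastava transform
`Φ z = C(σ+γ,γ) σ ∫₀¹ (1-s)^(σ-1) s^(γ+α-1) F(s z) ds`. -/
theorem stmt_19 (α : ℝ) (hα0 : 0 < α) (hα1 : α ≤ 1) (σ γ : ℝ) (hσ : 0 < σ)
    (hγ : 0 < γ) (n : ℕ) (β : ℝ) (hβ0 : 0 ≤ β) (hβ1 : β < 1)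
    (F : ℂ → ℂ) (hFd : DifferentiableOn ℂ F (ball (0 : ℂ) 1)) (hF0 : F 0 = 1)
    (hFT : TcondF α n β F)
    (Φ : ℂ → ℂ)
    (hΦ : ∀ z : ℂ, Φ z = ((Real.Gamma (σ + γ + 1) /
        (Real.Gamma (σ + 1) * Real.Gamma (γ + 1)) * σ : ℝ) : ℂ) *
      ∫ s in (0 : ℝ)..1, (((1 - s) ^ (σ - 1) * s ^ (γ + α - 1) : ℝ) : ℂ) * F ((s : ℂ) * z)) :
    DifferentiableOn ℂ Φ (ball (0 : ℂ) 1) ∧ TcondF α n β Φ := by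
  have hp : 0 < γ + α := by linarith
  have hw_int : IntegrableOn (fun s : ℝ => (1 - s) ^ (σ - 1) * s ^ (γ + α - 1)) (Ioc (0:ℝ) 1) :=
    w_integrable hp hσ
  have hw_nonneg : ∀ s ∈ Ioc (0:ℝ) 1, 0 ≤ (1 - s) ^ (σ - 1) * s ^ (γ + α - 1) :=
    fun s hs => mul_nonneg (Real.rpow_nonneg (by linarith [hs.2]) _) (Real.rpow_nonneg hs.1.le _)
  have hw_pos : ∀ s ∈ Ioo (0:ℝ) 1, 0 < (1 - s) ^ (σ - 1) * s ^ (γ + α - 1) :=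
    fun s hs => mul_pos (Real.rpow_pos_of_pos (by linarith [hs.2]) _) (Real.rpow_pos_of_pos hs.1 _)
  have hΓσγα : 0 < Real.Gamma (σ + γ + α) := Real.Gamma_pos_of_pos (by linarith)
  have hΓγ1 : 0 < Real.Gamma (γ + 1) := Real.Gamma_pos_of_pos (by linarith)
  have hΓσγ1 : 0 < Real.Gamma (σ + γ + 1) := Real.Gamma_pos_of_pos (by linarith)
  have hΓγα : 0 < Real.Gamma (γ + α) := Real.Gamma_pos_of_pos hp
  have hΓσ : 0 < Real.Gamma σ := Real.Gamma_pos_of_pos hσ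
  have hΓσ1 : 0 < Real.Gamma (σ + 1) := Real.Gamma_pos_of_pos (by linarith)
  have hC'pos : 0 < Real.Gamma (σ + γ + 1) / (Real.Gamma (σ + 1) * Real.Gamma (γ + 1)) * σ := by
    positivity
  have hb0 : ∫ s in Ioc (0:ℝ) 1, (1 - s) ^ (σ - 1) * s ^ (γ + α - 1)
      = Real.Gamma (γ + α) * Real.Gamma σ / Real.Gamma (σ + γ + α) := by
    have h := beta_value hp hσ
    rw [show γ + α + σ = σ + γ + α by ring] at h
    exact h
  have hm1 : 1 ≤ Real.Gamma (σ + γ + 1) / (Real.Gamma (σ + 1) * Real.Gamma (γ + 1)) * σ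
      * ∫ s in Ioc (0:ℝ) 1, (1 - s) ^ (σ - 1) * s ^ (γ + α - 1) := by
    rw [hb0, Real.Gamma_add_one hσ.ne']
    have key : Real.Gamma (σ+γ+1) / (σ * Real.Gamma σ * Real.Gamma (γ+1)) * σ
        * (Real.Gamma (γ+α) * Real.Gamma σ / Real.Gamma (σ+γ+α))
        = (Real.Gamma (σ+γ+1) * Real.Gamma (γ+α)) / (Real.Gamma (γ+1) * Real.Gamma (σ+γ+α)) := by
      field_simp
    rw [key, le_div_iff₀ (by positivity), one_mul]
    exact gamma_ineq hα0 hα1 hσ hγ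
  -- Taylor expansion of F on the unit ball
  have hFsum : ∀ z ∈ ball (0:ℂ) 1, HasSum (fun k => taylorCoeff F k * z ^ k) (F z) := by
    intro z hz
    simpa [taylorCoeff] using hasSum_taylor_of_diff hFd z hz
  have hmem_ball : ∀ {z : ℂ}, z ∈ ball (0:ℂ) 1 → ∀ s ∈ Icc (0:ℝ) 1,
      ((s:ℂ) * z) ∈ ball (0:ℂ) 1 := by
    intro z hz s hs
    rw [mem_ball_zero_iff] at hz ⊢
    rw [norm_mul, Complex.norm_real, Real.norm_eq_abs, _root_.abs_of_nonneg hs.1]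
    calc s * ‖z‖ ≤ 1 * ‖z‖ := mul_le_mul_of_nonneg_right hs.2 (norm_nonneg z)
    _ = ‖z‖ := one_mul _
    _ < 1 := hz
  have habs : ∀ (a : ℕ → ℂ), (∀ y ∈ ball (0:ℂ) 1, Summable (fun k => a k * y ^ k)) →
      ∀ z ∈ ball (0:ℂ) 1, Summable fun k => ‖a k‖ * ‖z‖ ^ k := by
    intro a ha z hz
    rw [mem_ball_zero_iff] at hz
    have h1 : (0:ℝ) ≤ ‖z‖ := norm_nonneg z
    refine summable_norm_of_summable h1 (show ‖z‖ < (‖z‖+1)/2 by linarith) (ha _ ?_)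
    rw [mem_ball_zero_iff, Complex.norm_real, Real.norm_eq_abs,
      _root_.abs_of_nonneg (by linarith : (0:ℝ) ≤ (‖z‖+1)/2)]
    linarith
  have hset : Metric.eball (0:ℂ) 1 = ball (0:ℂ) 1 := by
    ext x; rw [mem_eball_one_iff', mem_ball_zero_iff]
  -- power series representation of Φ
  have hΦsum : ∀ z ∈ ball (0:ℂ) 1, HasSum (fun k =>
      (((Real.Gamma (σ+γ+1) / (Real.Gamma (σ+1) * Real.Gamma (γ+1)) * σ) *
        (∫ s in Ioc (0:ℝ) 1, (1 - s) ^ (σ - 1) * s ^ (γ + α - 1) * s ^ k) : ℝ) : ℂ)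
      * taylorCoeff F k * z ^ k) (Φ z) := by
    intro z hz
    have hswap := hasSum_integral_weighted hw_int hw_nonneg
      (d := taylorCoeff F) (z := z) (g := fun s : ℝ => F ((s:ℂ) * z))
      (habs _ (fun y hy => (hFsum y hy).summable) z hz)
      (fun s hs => hFsum _ (hmem_ball hz _ (Ioc_subset_Icc_self hs)))
    have h2 := hswap.mul_left
      (((Real.Gamma (σ+γ+1) / (Real.Gamma (σ+1) * Real.Gamma (γ+1)) * σ : ℝ)) : ℂ)
    rw [hΦ z, intervalIntegral.integral_of_le zero_le_one]
    convert h2 using 1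
    · rfl
    funext k
    push_cast
    ring
  have hΦps : HasFPowerSeriesOnBall Φ (FormalMultilinearSeries.ofScalars ℂ (fun k =>
      (((Real.Gamma (σ+γ+1) / (Real.Gamma (σ+1) * Real.Gamma (γ+1)) * σ) *
        (∫ s in Ioc (0:ℝ) 1, (1 - s) ^ (σ - 1) * s ^ (γ + α - 1) * s ^ k) : ℝ) : ℂ)
      * taylorCoeff F k)) 0 1 :=
    hasFPS_of_hasSum (fun z hz => hΦsum z hz)
  have hΦdiff : DifferentiableOn ℂ Φ (ball (0:ℂ) 1) := by
    have h := hΦps.differentiableOn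
    rwa [hset] at h
  have hΦcoeff : ∀ k, taylorCoeff Φ k =
      (((Real.Gamma (σ+γ+1) / (Real.Gamma (σ+1) * Real.Gamma (γ+1)) * σ) *
        (∫ s in Ioc (0:ℝ) 1, (1 - s) ^ (σ - 1) * s ^ (γ + α - 1) * s ^ k) : ℝ) : ℂ)
      * taylorCoeff F k := by
    intro k
    rw [show taylorCoeff Φ k = iteratedDeriv k Φ 0 / (k.factorial : ℂ) from rfl,
      taylorCoeff_eq_coeff' hΦps k, ofScalars_coeff]
  -- the function G
  have hGps : HasFPowerSeriesOnBall
      (fun z => ∑' k : ℕ, ((((α + k) / α) ^ n : ℝ) : ℂ) * taylorCoeff F k * z ^ k)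
      (FormalMultilinearSeries.ofScalars ℂ
        (fun k => ((((α + k) / α) ^ n : ℝ) : ℂ) * taylorCoeff F k)) 0 1 :=
    hasFPS_of_hasSum (fun z hz => (hFT z hz).1.hasSum)
  have hGcont : ContinuousOn
      (fun z => ∑' k : ℕ, ((((α + k) / α) ^ n : ℝ) : ℂ) * taylorCoeff F k * z ^ k)
      (ball (0:ℂ) 1) := by
    have h := hGps.continuousOn
    rwa [hset] at h
  refine ⟨hΦdiff, ?_⟩
  intro z hz
  -- swap for the transformed series
  have hswap := hasSum_integral_weighted hw_int hw_nonneg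
    (d := fun k => ((((α + k) / α) ^ n : ℝ) : ℂ) * taylorCoeff F k) (z := z)
    (g := fun s : ℝ => ∑' k : ℕ, ((((α + k) / α) ^ n : ℝ) : ℂ) * taylorCoeff F k * ((s:ℂ)*z) ^ k)
    (habs _ (fun y hy => (hFT y hy).1) z hz)
    (fun s hs => (hFT _ (hmem_ball hz _ (Ioc_subset_Icc_self hs))).1.hasSum)
  have h2 := hswap.mul_left
    (((Real.Gamma (σ+γ+1) / (Real.Gamma (σ+1) * Real.Gamma (γ+1)) * σ : ℝ)) : ℂ)
  have hfun_eq : (fun k : ℕ => ((((α + k) / α) ^ n : ℝ) : ℂ) * taylorCoeff Φ k * z ^ k)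
      = fun k : ℕ => ((Real.Gamma (σ+γ+1) / (Real.Gamma (σ+1) * Real.Gamma (γ+1)) * σ : ℝ) : ℂ) *
        ((((∫ s in Ioc (0:ℝ) 1, (1 - s) ^ (σ - 1) * s ^ (γ + α - 1) * s ^ k : ℝ)) : ℂ) *
          (((((α + k) / α) ^ n : ℝ) : ℂ) * taylorCoeff F k * z ^ k)) := by
    funext k
    rw [hΦcoeff k]
    push_cast
    ring
  -- integrability of the weighted G integrand
  have hmapcont : ContinuousOn (fun s : ℝ =>
      ∑' k : ℕ, ((((α + k) / α) ^ n : ℝ) : ℂ) * taylorCoeff F k * ((s:ℂ)*z) ^ k) (Icc 0 1) := by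
    have hin : ContinuousOn (fun s : ℝ => ((s:ℂ) * z)) (Icc 0 1) :=
      (Complex.continuous_ofReal.mul continuous_const).continuousOn
    exact hGcont.comp hin (fun s hs => hmem_ball hz _ hs)
  obtain ⟨M, hM⟩ := isCompact_Icc.exists_bound_of_continuousOn hmapcont
  have haesm : AEStronglyMeasurable (fun s : ℝ =>
      ∑' k : ℕ, ((((α + k) / α) ^ n : ℝ) : ℂ) * taylorCoeff F k * ((s:ℂ)*z) ^ k)
      (volume.restrict (Ioc 0 1)) :=
    (hmapcont.mono Ioc_subset_Icc_self).aestronglyMeasurable measurableSet_Ioc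
  have hint_wG : IntegrableOn (fun s : ℝ => (((1-s)^(σ-1) * s^(γ+α-1) : ℝ):ℂ) *
      ∑' k : ℕ, ((((α + k) / α) ^ n : ℝ) : ℂ) * taylorCoeff F k * ((s:ℂ)*z) ^ k) (Ioc 0 1) := by
    have h1 : IntegrableOn (fun s : ℝ =>
        (∑' k : ℕ, ((((α + k) / α) ^ n : ℝ) : ℂ) * taylorCoeff F k * ((s:ℂ)*z) ^ k) *
        (((1-s)^(σ-1)*s^(γ+α-1):ℝ):ℂ)) (Ioc 0 1) := by
      refine Integrable.bdd_mul (c := M) hw_int.ofReal haesm ?_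
      filter_upwards [ae_restrict_mem measurableSet_Ioc] with s hs
      exact hM _ (Ioc_subset_Icc_self hs)
    exact h1.congr (Filter.EventuallyEq.of_eq (funext fun s => mul_comm _ _))
  have hre := integral_re hint_wG
  simp only [RCLike.re_to_complex] at hre
  -- pointwise: re of the integrand
  have hre_pt : ∀ s : ℝ, ((((1-s)^(σ-1) * s^(γ+α-1) : ℝ):ℂ) *
      ∑' k : ℕ, ((((α + k) / α) ^ n : ℝ) : ℂ) * taylorCoeff F k * ((s:ℂ)*z) ^ k).re
      = (1-s)^(σ-1) * s^(γ+α-1) *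
        (∑' k : ℕ, ((((α + k) / α) ^ n : ℝ) : ℂ) * taylorCoeff F k * ((s:ℂ)*z) ^ k).re :=
    fun s => Complex.re_ofReal_mul _ _
  have hre_int : IntegrableOn (fun s : ℝ => (1-s)^(σ-1) * s^(γ+α-1) *
      (∑' k : ℕ, ((((α + k) / α) ^ n : ℝ) : ℂ) * taylorCoeff F k * ((s:ℂ)*z) ^ k).re)
      (Ioc (0:ℝ) 1) := by
    have := hint_wG.re
    exact this.congr (Filter.EventuallyEq.of_eq (funext fun s => hre_pt s))
  have hpos_int : (0:ℝ) < ∫ s in Ioc (0:ℝ) 1, (1-s)^(σ-1) * s^(γ+α-1) *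
      ((∑' k : ℕ, ((((α + k) / α) ^ n : ℝ) : ℂ) * taylorCoeff F k * ((s:ℂ)*z) ^ k).re - β) := by
    rw [← intervalIntegral.integral_of_le zero_le_one]
    refine intervalIntegral.intervalIntegral_pos_of_pos_on ?_ ?_ zero_lt_one
    · rw [intervalIntegrable_iff_integrableOn_Ioc_of_le zero_le_one]
      have h3 : IntegrableOn (fun s : ℝ => (1-s)^(σ-1) * s^(γ+α-1) *
          (∑' k : ℕ, ((((α + k) / α) ^ n : ℝ) : ℂ) * taylorCoeff F k * ((s:ℂ)*z) ^ k).re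
          - (1-s)^(σ-1) * s^(γ+α-1) * β) (Ioc (0:ℝ) 1) :=
        hre_int.sub (hw_int.mul_const β)
      exact h3.congr (Filter.EventuallyEq.of_eq (funext fun s => by
        first
        | ring1
        | (simp only [Pi.sub_apply]; beta_reduce; ring1)))
    · intro s hs
      refine mul_pos (hw_pos s hs) (sub_pos.2 ?_)
      exact (hFT _ (hmem_ball hz _ (Ioo_subset_Icc_self hs))).2
  have hsplit : ∫ s in Ioc (0:ℝ) 1, (1-s)^(σ-1) * s^(γ+α-1) *
      (∑' k : ℕ, ((((α + k) / α) ^ n : ℝ) : ℂ) * taylorCoeff F k * ((s:ℂ)*z) ^ k).re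
      = (∫ s in Ioc (0:ℝ) 1, (1-s)^(σ-1) * s^(γ+α-1) *
          ((∑' k : ℕ, ((((α + k) / α) ^ n : ℝ) : ℂ) * taylorCoeff F k * ((s:ℂ)*z) ^ k).re - β))
        + β * ∫ s in Ioc (0:ℝ) 1, (1-s)^(σ-1) * s^(γ+α-1) := by
    rw [← integral_const_mul]
    have hsub : IntegrableOn (fun s : ℝ => (1-s)^(σ-1) * s^(γ+α-1) *
        ((∑' k : ℕ, ((((α + k) / α) ^ n : ℝ) : ℂ) * taylorCoeff F k * ((s:ℂ)*z) ^ k).re - β))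
        (Ioc (0:ℝ) 1) := by
      have h3 := hre_int.sub (hw_int.mul_const β)
      exact h3.congr (Filter.EventuallyEq.of_eq (funext fun s => by
        first
        | ring1
        | (simp only [Pi.sub_apply]; beta_reduce; ring1)))
    rw [← integral_add hsub (hw_int.const_mul β)]
    refine setIntegral_congr_fun measurableSet_Ioc fun s hs => ?_
    ring
  constructor
  · rw [hfun_eq]
    exact h2.summable
  · rw [hfun_eq, h2.tsum_eq, Complex.re_ofReal_mul]
    beta_reduce
    rw [← hre]
    simp only [hre_pt]
    have hW := hm1
    set I := ∫ s in Ioc (0:ℝ) 1, (1-s)^(σ-1) * s^(γ+α-1) *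
      ((∑' k : ℕ, ((((α + k) / α) ^ n : ℝ) : ℂ) * taylorCoeff F k * ((s:ℂ)*z) ^ k).re - β) with hI
    set W := ∫ s in Ioc (0:ℝ) 1, (1-s)^(σ-1) * s^(γ+α-1) with hWd
    set Cst := Real.Gamma (σ+γ+1) / (Real.Gamma (σ+1) * Real.Gamma (γ+1)) * σ with hCst
    rw [hsplit]
    have hexp : Cst * (I + β * W) = Cst * I + β * (Cst * W) := by ring
    rw [hexp]
    have h5 : β * 1 ≤ β * (Cst * W) := mul_le_mul_of_nonneg_left hW hβ0
    have h6 : 0 < Cst * I := mul_pos hC'pos hpos_int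
    linarith
end
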